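/- arXiv:2512.12700 — 6 statements merged into one kernel-verified Lean document; each statement's English description precedes it below -/
import Mathlib

section
/- Let g : ℝ → ℝ be integrable, nonnegative, even, and strictly radially decreasing on [0,∞), and fix x > 0. For k ∈ ℤ define A_k = ∫_{(2k−1)/(4x)}^{(2k+1)/(4x)} g(ξ) cos(2πxξ) dξ. Then the sequence |A_k| is monotonically decreasing in k for k ≥ 0: |A_{k+1}| < |A_k| for all k ≥ 0. -/
open MeasureTheory Real intervalIntegral

/-- For strictly radially decreasing g, |A_{k+1}| < |A_k| for k ≥ 0. -/
theorem A_k_strict_decreasing (g : ℝ → ℝ) (hg : Integrable g) (hg0 : ∀ ξ, 0 ≤ g ξ)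
    (hgeven : ∀ ξ, g (-ξ) = g ξ)
    (hgdec : ∀ ξ₁ ξ₂ : ℝ, |ξ₁| < |ξ₂| → g ξ₂ < g ξ₁)
    (x : ℝ) (hx : 0 < x)
    (A : ℤ → ℝ)
    (hA : ∀ k : ℤ, A k = ∫ ξ in ((2 * (k : ℝ) - 1) / (4 * x))..((2 * (k : ℝ) + 1) / (4 * x)),
        g ξ * Real.cos (2 * π * x * ξ)) :
    ∀ k : ℕ, |A ((k : ℤ) + 1)| < |A (k : ℤ)| := by
  have hx4 : (0:ℝ) < 4 * x := by linarith
  have hxne : x ≠ 0 := ne_of_gt hx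
  set c : ℝ := 1 / (2 * x) with hc
  -- cos identity
  have hcos_eq : ∀ (m : ℕ) (ξ : ℝ),
      Real.cos (2 * π * x * ξ) = (-1 : ℝ) ^ m * Real.cos (2 * π * x * ξ - m * π) := by
    intro m ξ
    have h := Real.cos_add_int_mul_pi (2 * π * x * ξ - (m:ℝ) * π) (m : ℤ)
    push_cast at h
    rw [sub_add_cancel] at h
    exact h
  -- membership of phase in closed interval
  have hphi_mem : ∀ (m : ℕ) (ξ : ℝ),
      ξ ∈ Set.Icc ((2 * (m:ℝ) - 1) / (4 * x)) ((2 * (m:ℝ) + 1) / (4 * x)) →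
      2 * π * x * ξ - m * π ∈ Set.Icc (-(π/2)) (π/2) := by
    intro m ξ ⟨h1, h2⟩
    have hπ := Real.pi_pos
    have l1 : 2 * π * x * ((2 * (m:ℝ) - 1) / (4 * x)) = (m:ℝ) * π - π/2 := by
      field_simp; ring
    have l2 : 2 * π * x * ((2 * (m:ℝ) + 1) / (4 * x)) = (m:ℝ) * π + π/2 := by
      field_simp; ring
    have m1 : 2 * π * x * ((2 * (m:ℝ) - 1) / (4 * x)) ≤ 2 * π * x * ξ := by
      apply mul_le_mul_of_nonneg_left h1; positivity
    have m2 : 2 * π * x * ξ ≤ 2 * π * x * ((2 * (m:ℝ) + 1) / (4 * x)) := by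
      apply mul_le_mul_of_nonneg_left h2; positivity
    rw [l1] at m1; rw [l2] at m2
    constructor <;> linarith
  -- strict version
  have hphi_memo : ∀ (m : ℕ) (ξ : ℝ),
      ξ ∈ Set.Ioo ((2 * (m:ℝ) - 1) / (4 * x)) ((2 * (m:ℝ) + 1) / (4 * x)) →
      2 * π * x * ξ - m * π ∈ Set.Ioo (-(π/2)) (π/2) := by
    intro m ξ ⟨h1, h2⟩
    have hπ := Real.pi_pos
    have l1 : 2 * π * x * ((2 * (m:ℝ) - 1) / (4 * x)) = (m:ℝ) * π - π/2 := by
      field_simp; ring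
    have l2 : 2 * π * x * ((2 * (m:ℝ) + 1) / (4 * x)) = (m:ℝ) * π + π/2 := by
      field_simp; ring
    have m1 : 2 * π * x * ((2 * (m:ℝ) - 1) / (4 * x)) < 2 * π * x * ξ := by
      apply mul_lt_mul_of_pos_left h1; positivity
    have m2 : 2 * π * x * ξ < 2 * π * x * ((2 * (m:ℝ) + 1) / (4 * x)) := by
      apply mul_lt_mul_of_pos_left h2; positivity
    rw [l1] at m1; rw [l2] at m2
    constructor <;> linarith
  have hab : ∀ m : ℕ, (2 * (m:ℝ) - 1) / (4 * x) < (2 * (m:ℝ) + 1) / (4 * x) := by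
    intro m
    gcongr
    linarith
  -- absolute value of cos equals the shifted cos on the closed interval
  have habs_eq : ∀ (m : ℕ) (ξ : ℝ),
      ξ ∈ Set.Icc ((2 * (m:ℝ) - 1) / (4 * x)) ((2 * (m:ℝ) + 1) / (4 * x)) →
      |Real.cos (2 * π * x * ξ)| = Real.cos (2 * π * x * ξ - m * π) := by
    intro m ξ hξ
    have h2 : 0 ≤ Real.cos (2 * π * x * ξ - m * π) :=
      Real.cos_nonneg_of_mem_Icc (hphi_mem m ξ hξ)
    rw [hcos_eq m ξ, abs_mul, abs_pow, abs_neg, abs_one, one_pow, one_mul, abs_of_nonneg h2]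
  -- key: |A m| equals integral of g * |cos|
  have key : ∀ m : ℕ, |A (m:ℤ)| =
      ∫ ξ in ((2 * (m:ℝ) - 1) / (4 * x))..((2 * (m:ℝ) + 1) / (4 * x)),
        g ξ * |Real.cos (2 * π * x * ξ)| := by
    intro m
    have hA' := hA (m:ℤ)
    push_cast at hA'
    have hEq : Set.EqOn (fun ξ => g ξ * Real.cos (2 * π * x * ξ))
        (fun ξ => (-1:ℝ)^m * (g ξ * |Real.cos (2 * π * x * ξ)|))
        (Set.uIcc ((2 * (m:ℝ) - 1) / (4 * x)) ((2 * (m:ℝ) + 1) / (4 * x))) := by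
      intro ξ hξ
      rw [Set.uIcc_of_le (hab m).le] at hξ
      simp only
      rw [habs_eq m ξ hξ, hcos_eq m ξ]; ring
    rw [hA', intervalIntegral.integral_congr hEq, intervalIntegral.integral_const_mul,
      abs_mul, abs_pow, abs_neg, abs_one, one_pow, one_mul]
    apply abs_of_nonneg
    apply intervalIntegral.integral_nonneg (hab m).le
    intro u _
    exact mul_nonneg (hg0 u) (abs_nonneg _)
  intro k
  set a : ℝ := (2 * (k:ℝ) - 1) / (4 * x) with ha
  set b : ℝ := (2 * (k:ℝ) + 1) / (4 * x) with hb
  -- rewrite |A (k+1)| as shifted integral over a..b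
  have k1 := key (k+1)
  push_cast at k1
  have e1 : (2 * ((k:ℝ) + 1) - 1) / (4 * x) = a + c := by
    rw [ha, hc]; field_simp; ring
  have e2 : (2 * ((k:ℝ) + 1) + 1) / (4 * x) = b + c := by
    rw [hb, hc]; field_simp; ring
  rw [e1, e2, ← intervalIntegral.integral_comp_add_right
      (fun ξ => g ξ * |Real.cos (2 * π * x * ξ)|) c] at k1
  -- simplify |cos (2πx(ξ+c))| = |cos (2πxξ)|
  have hper : ∀ ξ : ℝ, |Real.cos (2 * π * x * (ξ + c))| = |Real.cos (2 * π * x * ξ)| := by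
    intro ξ
    have : 2 * π * x * (ξ + c) = 2 * π * x * ξ + π := by
      rw [hc]; field_simp
    rw [this, Real.cos_add_pi, abs_neg]
  have k1' : |A ((k:ℤ) + 1)| = ∫ ξ in a..b, g (ξ + c) * |Real.cos (2 * π * x * ξ)| := by
    rw [k1]
    apply intervalIntegral.integral_congr
    intro ξ _
    simp only
    rw [hper ξ]
  -- integrability
  have hcont : Continuous fun ξ : ℝ => |Real.cos (2 * π * x * ξ)| :=
    (Real.continuous_cos.comp (continuous_const.mul continuous_id)).abs
  have hI1 : IntervalIntegrable (fun ξ => g ξ * |Real.cos (2 * π * x * ξ)|) volume a b :=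
    (hg.intervalIntegrable).mul_continuousOn hcont.continuousOn
  have hgshift : IntervalIntegrable (fun ξ => g (ξ + c)) volume a b := by
    have := (hg.intervalIntegrable (a := a + c) (b := b + c)).comp_add_right c
    simpa using this
  have hI2 : IntervalIntegrable (fun ξ => g (ξ + c) * |Real.cos (2 * π * x * ξ)|) volume a b :=
    hgshift.mul_continuousOn hcont.continuousOn
  -- strict positivity of the difference
  have hsub : 0 < ∫ ξ in a..b,
      (g ξ * |Real.cos (2 * π * x * ξ)| - g (ξ + c) * |Real.cos (2 * π * x * ξ)|) := by
    apply intervalIntegral_pos_of_pos_on (hI1.sub hI2) _ (hab k)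
    intro ξ hξ
    have hξI : ξ ∈ Set.Icc a b := Set.mem_Icc.mpr ⟨hξ.1.le, hξ.2.le⟩
    -- |cos| > 0
    have hcpos : 0 < |Real.cos (2 * π * x * ξ)| := by
      rw [habs_eq k ξ hξI]
      exact Real.cos_pos_of_mem_Ioo (hphi_memo k ξ hξ)
    -- g ξ > g (ξ + c)
    have hd0 : (0:ℝ) < 1 / (4 * x) := by positivity
    have hcd : c = 2 * (1 / (4 * x)) := by rw [hc]; field_simp; ring
    have haL : -(1 / (4 * x)) ≤ a := by
      rw [ha, neg_div' (4 * x) 1]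
      gcongr
      have : (0:ℝ) ≤ (k:ℝ) := Nat.cast_nonneg k
      linarith
    have hξL : -(1 / (4 * x)) < ξ := lt_of_le_of_lt haL hξ.1
    have habslt : |ξ| < |ξ + c| := by
      have h1 : 0 < ξ + c := by rw [hcd]; linarith
      rw [abs_of_pos h1, abs_lt]
      constructor
      · rw [hcd]; linarith
      · rw [hcd]; linarith
    have hglt : g (ξ + c) < g ξ := hgdec ξ (ξ + c) habslt
    have : 0 < (g ξ - g (ξ + c)) * |Real.cos (2 * π * x * ξ)| :=
      mul_pos (by linarith) hcpos
    linarith [this, sub_mul (g ξ) (g (ξ + c)) (|Real.cos (2 * π * x * ξ)|)]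
  rw [intervalIntegral.integral_sub hI1 hI2] at hsub
  rw [key k, k1']
  linarith
end

section
/- Let û₀ ∈ L¹(ℝ) be nonnegative, even, and radially decreasing, let Ĵ(ξ) = e^{−2π²σ²ξ²} for some σ > 0, let d > 0, and assume that for a given x > 0 one has ∫_0^{3/(4x)} û₀(ξ) cos(2πxξ) dξ > 0. Then the function u(t,x) = ∫_ℝ e^{t(d·Ĵ(ξ)−1)} û₀(ξ) cos(2πxξ) dξ satisfies, for all t ≥ 0, (A_0 + 2A_1) e^{t(d·Ĵ(1/(4x)) − 1)} ≤ u(t,x) ≤ A_0 e^{t(d−1)}, where A_0 = ∫_{−1/(4x)}^{1/(4x)} û₀(ξ)cos(2πxξ)dξ > 0 and A_1 = ∫_{1/(4x)}^{3/(4x)} û₀(ξ)cos(2πxξ)dξ. -/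
open MeasureTheory Real intervalIntegral

private lemma tile_mem (c δ : ℝ) (hδ : 0 < δ) {ξ : ℝ} (hξ : c ≤ ξ) :
    ∃ j : ℕ, c + 2*δ*j ≤ ξ ∧ ξ < c + 2*δ*j + 2*δ := by
  refine ⟨⌊(ξ - c) / (2*δ)⌋₊, ?_, ?_⟩
  · have h1 : (⌊(ξ - c) / (2*δ)⌋₊ : ℝ) ≤ (ξ - c)/(2*δ) :=
      Nat.floor_le (div_nonneg (by linarith) (by positivity))
    have h2 : 2*δ*(⌊(ξ - c) / (2*δ)⌋₊ : ℝ) ≤ ξ - c := by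
      rw [mul_comm]
      exact (le_div_iff₀ (by positivity)).mp h1
    linarith
  · have h2 : (ξ - c)/(2*δ) < (⌊(ξ - c) / (2*δ)⌋₊ : ℝ) + 1 := Nat.lt_floor_add_one _
    have h3 : ξ - c < 2*δ*((⌊(ξ - c) / (2*δ)⌋₊ : ℝ) + 1) := by
      rw [mul_comm]
      exact (div_lt_iff₀ (by positivity)).mp h2
    nlinarith

private lemma tail_pairing_nonneg (g : ℝ → ℝ) (hg : Integrable g) (c δ : ℝ) (hδ : 0 < δ)
    (hsign : ∀ η, (∃ j : ℕ, c + 2*δ*j ≤ η ∧ η < c + 2*δ*j + δ) → 0 ≤ g η + g (η + δ)) :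
    0 ≤ ∫ ξ in Set.Ici c, g ξ := by
  set S : Set ℝ := ⋃ j : ℕ, Set.Ico (c + 2*δ*j) (c + 2*δ*j + δ) with hSdef
  set T : Set ℝ := ⋃ j : ℕ, Set.Ico (c + 2*δ*j + δ) (c + 2*δ*j + 2*δ) with hTdef
  have hS : MeasurableSet S := MeasurableSet.iUnion fun j => measurableSet_Ico
  have hT : MeasurableSet T := MeasurableSet.iUnion fun j => measurableSet_Ico
  have hST : Disjoint S T := by
    rw [Set.disjoint_left]
    rintro ξ hξS hξT
    obtain ⟨i, hi⟩ := Set.mem_iUnion.mp hξS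
    obtain ⟨j, hj⟩ := Set.mem_iUnion.mp hξT
    simp only [Set.mem_Ico] at hi hj
    have h1 : (j:ℝ) < i := by nlinarith
    have h2 : (i:ℝ) < j + 1 := by nlinarith
    have h1' : j < i := by exact_mod_cast h1
    have h2' : i < j + 1 := by exact_mod_cast h2
    omega
  have hU : S ∪ T = Set.Ici c := by
    apply Set.Subset.antisymm
    · rintro ξ (hξ | hξ) <;>
      · obtain ⟨j, hj⟩ := Set.mem_iUnion.mp hξ
        simp only [Set.mem_Ico] at hj
        have := Nat.cast_nonneg (α := ℝ) j
        simp only [Set.mem_Ici]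
        nlinarith
    · intro ξ hξ
      obtain ⟨j, hj1, hj2⟩ := tile_mem c δ hδ hξ
      rcases lt_or_ge ξ (c + 2*δ*j + δ) with h | h
      · exact Or.inl (Set.mem_iUnion.mpr ⟨j, Set.mem_Ico.mpr ⟨hj1, h⟩⟩)
      · exact Or.inr (Set.mem_iUnion.mpr ⟨j, Set.mem_Ico.mpr ⟨h, hj2⟩⟩)
  have hTim : T = (fun η => η + δ) '' S := by
    rw [hSdef, hTdef, Set.image_iUnion]
    refine Set.iUnion_congr fun j => ?_
    rw [Set.image_add_const_Ico]
    ring_nf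
  have hgd : Integrable (fun η => g (η + δ)) := hg.comp_add_right δ
  have hTeq : ∫ ξ in T, g ξ = ∫ η in S, g (η + δ) := by
    rw [← MeasureTheory.integral_indicator hT, ← MeasureTheory.integral_indicator hS]
    rw [← integral_add_right_eq_self (T.indicator g) δ]
    congr 1
    funext η
    have hmem : η + δ ∈ T ↔ η ∈ S := by
      rw [hTim]
      constructor
      · rintro ⟨η', hη', he⟩
        have : η' = η := by linarith [add_right_cancel he]
        rwa [← this]
      · intro h; exact ⟨η, h, rfl⟩
    by_cases h : η ∈ S
    · rw [Set.indicator_of_mem (hmem.mpr h), Set.indicator_of_mem h]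
    · rw [Set.indicator_of_notMem (fun hc => h (hmem.mp hc)),
        Set.indicator_of_notMem h]
  have hsplit : ∫ ξ in Set.Ici c, g ξ = ∫ η in S, (g η + g (η + δ)) := by
    rw [← hU, setIntegral_union hST hT hg.integrableOn hg.integrableOn, hTeq,
      ← integral_add hg.integrableOn hgd.integrableOn]
  rw [hsplit]
  refine setIntegral_nonneg hS fun η hη => ?_
  obtain ⟨j, hj⟩ := Set.mem_iUnion.mp hη
  simp only [Set.mem_Ico] at hj
  exact hsign η ⟨j, hj.1, hj.2⟩

/-- Two-sided bound for u(t,x) under the positivity condition (H2) at a point x. -/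
theorem two_sided_bound (u₀hat : ℝ → ℝ) (hu : Integrable u₀hat) (hu0 : ∀ ξ, 0 ≤ u₀hat ξ)
    (hueven : ∀ ξ, u₀hat (-ξ) = u₀hat ξ)
    (hudec : ∀ ξ₁ ξ₂ : ℝ, |ξ₁| ≤ |ξ₂| → u₀hat ξ₂ ≤ u₀hat ξ₁)
    (σ d : ℝ) (hσ : 0 < σ) (hd : 0 < d)
    (Jhat : ℝ → ℝ) (hJ : ∀ ξ, Jhat ξ = Real.exp (-(2 * π ^ 2 * σ ^ 2 * ξ ^ 2)))
    (x : ℝ) (hx : 0 < x)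
    (hH2 : 0 < ∫ ξ in (0 : ℝ)..(3 / (4 * x)), u₀hat ξ * Real.cos (2 * π * x * ξ))
    (u : ℝ → ℝ → ℝ)
    (hu' : ∀ t y, u t y = ∫ ξ : ℝ, Real.exp (t * (d * Jhat ξ - 1)) * (u₀hat ξ * Real.cos (2 * π * y * ξ)))
    (A₀ A₁ : ℝ)
    (hA₀ : A₀ = ∫ ξ in (-1 / (4 * x))..(1 / (4 * x)), u₀hat ξ * Real.cos (2 * π * x * ξ))
    (hA₁ : A₁ = ∫ ξ in (1 / (4 * x))..(3 / (4 * x)), u₀hat ξ * Real.cos (2 * π * x * ξ)) :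
    0 < A₀ ∧
    ∀ t : ℝ, 0 ≤ t →
      (A₀ + 2 * A₁) * Real.exp (t * (d * Jhat (1 / (4 * x)) - 1)) ≤ u t x ∧
      u t x ≤ A₀ * Real.exp (t * (d - 1)) := by
  have hπ := Real.pi_pos
  have hx4 : (0:ℝ) < 4 * x := by linarith
  set a : ℝ := 1 / (4 * x) with hadef
  have ha : 0 < a := by positivity
  have hxa : x * a = 1 / 4 := by rw [hadef]; field_simp
  have hnega : -1 / (4 * x) = -a := by rw [hadef]; ring
  have h3a : 3 / (4 * x) = 3 * a := by rw [hadef]; ring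
  set ψ : ℝ → ℝ := fun ξ => u₀hat ξ * Real.cos (2 * π * x * ξ) with hψdef
  have hψm : AEStronglyMeasurable ψ volume :=
    hu.aestronglyMeasurable.mul
      (Real.continuous_cos.comp (continuous_const.mul continuous_id)).aestronglyMeasurable
  have hψi : Integrable ψ := by
    refine hu.mono' hψm (Filter.Eventually.of_forall fun ξ => ?_)
    rw [hψdef]
    simp only [Real.norm_eq_abs, abs_mul]
    calc |u₀hat ξ| * |Real.cos (2*π*x*ξ)| ≤ |u₀hat ξ| * 1 := by
          gcongr; exact Real.abs_cos_le_one _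
      _ = u₀hat ξ := by rw [mul_one, abs_of_nonneg (hu0 ξ)]
  have hψeven : ∀ ξ, ψ (-ξ) = ψ ξ := by
    intro ξ
    simp only [hψdef, hueven ξ, mul_neg, Real.cos_neg]
  -- Jhat facts
  have hJle : ∀ ξ, Jhat ξ ≤ 1 := fun ξ => by
    rw [hJ]; exact Real.exp_le_one_iff.mpr (neg_nonpos.mpr (by positivity))
  have hJmono : ∀ ξ₁ ξ₂ : ℝ, |ξ₁| ≤ |ξ₂| → Jhat ξ₂ ≤ Jhat ξ₁ := by
    intro ξ₁ ξ₂ h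
    rw [hJ, hJ]
    apply Real.exp_le_exp.mpr
    have hsq : ξ₁^2 ≤ ξ₂^2 := by
      rw [← sq_abs ξ₁, ← sq_abs ξ₂]
      exact pow_le_pow_left₀ (abs_nonneg _) h 2
    have := mul_le_mul_of_nonneg_left hsq (show (0:ℝ) ≤ 2*π^2*σ^2 by positivity)
    linarith
  -- cosine sign facts
  have h2πx : (0:ℝ) < 2*π*x := by positivity
  have hcos_mid : ∀ ξ ∈ Set.Icc (-a) a, 0 ≤ Real.cos (2*π*x*ξ) := by
    intro ξ hξ
    apply Real.cos_nonneg_of_mem_Icc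
    have e1 : 2*π*x*(-a) = -(π/2) := by linear_combination (-2*π)*hxa
    have e2 : 2*π*x*a = π/2 := by linear_combination (2*π)*hxa
    constructor
    · have := mul_le_mul_of_nonneg_left hξ.1 h2πx.le
      linarith
    · have := mul_le_mul_of_nonneg_left hξ.2 h2πx.le
      linarith
  have hcos_neg : ∀ ξ : ℝ, a ≤ ξ → ξ ≤ 3*a → Real.cos (2*π*x*ξ) ≤ 0 := by
    intro ξ h1 h2
    apply Real.cos_nonpos_of_pi_div_two_le_of_le
    · have := mul_le_mul_of_nonneg_left h1 h2πx.le
      have e2 : 2*π*x*a = π/2 := by linear_combination (2*π)*hxa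
      linarith
    · have := mul_le_mul_of_nonneg_left h2 h2πx.le
      have e3 : 2*π*x*(3*a) = π + π/2 := by linear_combination (6*π)*hxa
      linarith
  have hcosS1 : ∀ (η : ℝ) (j : ℕ), a + 2*(2*a)*j ≤ η → η < a + 2*(2*a)*j + 2*a →
      Real.cos (2*π*x*η) ≤ 0 := by
    intro η j h1 h2
    have e1 : Real.cos (2*π*x*η) = Real.cos (2*π*x*η - (j:ℝ)*(2*π)) := by
      conv_lhs => rw [show 2*π*x*η = (2*π*x*η - (j:ℝ)*(2*π)) + (j:ℤ)*(2*π) by push_cast; ring]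
      rw [Real.cos_add_int_mul_two_pi]
    rw [e1]
    apply Real.cos_nonpos_of_pi_div_two_le_of_le
    · have := mul_le_mul_of_nonneg_left h1 h2πx.le
      have e2 : 2*π*x*(a + 2*(2*a)*(j:ℝ)) = π/2 + (j:ℝ)*(2*π) := by
        linear_combination (2*π + 8*π*(j:ℝ)) * hxa
      linarith
    · have := mul_lt_mul_of_pos_left h2 h2πx
      have e3 : 2*π*x*(a + 2*(2*a)*(j:ℝ) + 2*a) = π + π/2 + (j:ℝ)*(2*π) := by
        linear_combination (6*π + 8*π*(j:ℝ)) * hxa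
      linarith
  have hcosS3 : ∀ (η : ℝ) (j : ℕ), 3*a + 2*(2*a)*j ≤ η → η < 3*a + 2*(2*a)*j + 2*a →
      0 ≤ Real.cos (2*π*x*η) := by
    intro η j h1 h2
    have e1 : Real.cos (2*π*x*η) = Real.cos (2*π*x*η - ((j:ℝ)+1)*(2*π)) := by
      have h := Real.cos_add_int_mul_two_pi (2*π*x*η - ((j:ℝ)+1)*(2*π)) ((j:ℤ)+1)
      rw [← h]
      congr 1
      push_cast
      ring
    rw [e1]
    apply Real.cos_nonneg_of_mem_Icc
    constructor
    · have := mul_le_mul_of_nonneg_left h1 h2πx.le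
      have e2 : 2*π*x*(3*a + 2*(2*a)*(j:ℝ)) = -(π/2) + ((j:ℝ)+1)*(2*π) := by
        linear_combination (6*π + 8*π*(j:ℝ)) * hxa
      linarith
    · have := mul_lt_mul_of_pos_left h2 h2πx
      have e3 : 2*π*x*(3*a + 2*(2*a)*(j:ℝ) + 2*a) = π/2 + ((j:ℝ)+1)*(2*π) := by
        linear_combination (10*π + 8*π*(j:ℝ)) * hxa
      linarith
  have hcos_pi : ∀ η : ℝ, Real.cos (2*π*x*(η + 2*a)) = -Real.cos (2*π*x*η) := by
    intro η
    have e : 2*π*x*(η + 2*a) = 2*π*x*η + π := by linear_combination (4*π)*hxa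
    rw [e, Real.cos_add_pi]
  -- A₀, A₁ as set integrals
  have hA₀' : A₀ = ∫ ξ in Set.Ioc (-a) a, ψ ξ := by
    rw [hA₀, hnega, intervalIntegral.integral_of_le (by linarith : -a ≤ a)]
  have hA₁' : A₁ = ∫ ξ in Set.Ioc a (3*a), ψ ξ := by
    rw [hA₁, h3a, intervalIntegral.integral_of_le (by linarith : a ≤ 3*a)]
  have hA₁np : A₁ ≤ 0 := by
    rw [hA₁']
    refine setIntegral_nonpos measurableSet_Ioc fun ξ hξ => ?_
    exact mul_nonpos_iff.mpr (Or.inl ⟨hu0 ξ, hcos_neg ξ hξ.1.le hξ.2⟩)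
  -- A₀ > 0
  have hψII : ∀ b c : ℝ, IntervalIntegrable ψ volume b c := fun b c => hψi.intervalIntegrable
  have hhalf : ∫ ξ in (0:ℝ)..a, ψ ξ = ∫ ξ in (-a:ℝ)..(0:ℝ), ψ ξ := by
    have h := intervalIntegral.integral_comp_neg (a := (0:ℝ)) (b := a) ψ
    simp only [hψeven, neg_zero] at h
    exact h
  have hA₀pos : 0 < A₀ := by
    have hs1 : (∫ ξ in (-a:ℝ)..(0:ℝ), ψ ξ) + ∫ ξ in (0:ℝ)..a, ψ ξ = ∫ ξ in (-a:ℝ)..a, ψ ξ :=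
      intervalIntegral.integral_add_adjacent_intervals (hψII _ _) (hψII _ _)
    have hs2 : (∫ ξ in (0:ℝ)..a, ψ ξ) + ∫ ξ in a..(3*a), ψ ξ = ∫ ξ in (0:ℝ)..(3*a), ψ ξ :=
      intervalIntegral.integral_add_adjacent_intervals (hψII _ _) (hψII _ _)
    rw [h3a] at hH2
    have hA₀eq : A₀ = (∫ ξ in (-a:ℝ)..(0:ℝ), ψ ξ) + ∫ ξ in (0:ℝ)..a, ψ ξ := by
      rw [hA₀, hnega, hs1]
    have hA₁eq : A₁ = ∫ ξ in a..(3*a), ψ ξ := by rw [hA₁, h3a]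
    rw [hA₀eq, ← hhalf]
    linarith [hH2, hs2, hA₁np, hA₁eq]
  refine ⟨hA₀pos, fun t ht => ?_⟩
  -- setup for fixed t
  set E : ℝ → ℝ := fun ξ => Real.exp (t * (d * Jhat ξ - 1)) with hEdef
  have hEpos : ∀ ξ, 0 < E ξ := fun ξ => Real.exp_pos _
  have hEub : ∀ ξ, E ξ ≤ Real.exp (t * (d - 1)) := by
    intro ξ
    apply Real.exp_le_exp.mpr
    have h1 : d * Jhat ξ ≤ d := by
      have := mul_le_mul_of_nonneg_left (hJle ξ) hd.le
      linarith
    exact mul_le_mul_of_nonneg_left (by linarith) ht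
  have hEmono : ∀ ξ₁ ξ₂ : ℝ, |ξ₁| ≤ |ξ₂| → E ξ₂ ≤ E ξ₁ := by
    intro ξ₁ ξ₂ h
    apply Real.exp_le_exp.mpr
    have := mul_le_mul_of_nonneg_left (hJmono ξ₁ ξ₂ h) hd.le
    exact mul_le_mul_of_nonneg_left (by linarith) ht
  have hJcont : Continuous Jhat := by
    have h : Jhat = fun ξ => Real.exp (-(2 * π ^ 2 * σ ^ 2 * ξ ^ 2)) := funext hJ
    rw [h]
    exact Real.continuous_exp.comp ((continuous_const.mul (continuous_pow 2)).neg)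
  have hEcont : Continuous E := by
    rw [hEdef]
    exact Real.continuous_exp.comp
      (continuous_const.mul ((continuous_const.mul hJcont).sub continuous_const))
  have hgm : AEStronglyMeasurable (fun ξ => E ξ * ψ ξ) volume :=
    hEcont.aestronglyMeasurable.mul hψm
  have hgi : Integrable (fun ξ => E ξ * ψ ξ) := by
    refine (hψi.norm.const_mul (Real.exp (t * (d - 1)))).mono' hgm
      (Filter.Eventually.of_forall fun ξ => ?_)
    rw [norm_mul, Real.norm_eq_abs (E ξ), abs_of_pos (hEpos ξ)]
    exact mul_le_mul_of_nonneg_right (hEub ξ) (norm_nonneg _)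
  have hgeven : ∀ ξ, E (-ξ) * ψ (-ξ) = E ξ * ψ ξ := by
    intro ξ
    have hJeven : Jhat (-ξ) = Jhat ξ := by rw [hJ, hJ]; ring_nf
    simp only [hEdef, hJeven, hψeven]
  -- pairing helpers
  have hBC : ∀ η : ℝ, a ≤ η → E (η + 2*a) * u₀hat (η + 2*a) ≤ E η * u₀hat η := by
    intro η hη
    have habs : |η| ≤ |η + 2*a| := by
      rw [abs_of_pos (by linarith), abs_of_pos (by linarith)]
      linarith
    exact mul_le_mul (hEmono η (η + 2*a) habs) (hudec η (η + 2*a) habs) (hu0 _) (hEpos η).le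
  have hpair : ∀ η : ℝ, (E η * ψ η) + (E (η + 2*a) * ψ (η + 2*a)) =
      Real.cos (2*π*x*η) * (E η * u₀hat η - E (η + 2*a) * u₀hat (η + 2*a)) := by
    intro η
    simp only [hψdef]
    rw [hcos_pi η]
    ring
  -- tail bounds
  have htail3 : 0 ≤ ∫ ξ in Set.Ici (3*a), E ξ * ψ ξ := by
    refine tail_pairing_nonneg _ hgi (3*a) (2*a) (by linarith) fun η hη => ?_
    obtain ⟨j, h1, h2⟩ := hη
    rw [hpair η]
    exact mul_nonneg (hcosS3 η j h1 h2) (sub_nonneg.mpr (hBC η (by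
      have := Nat.cast_nonneg (α := ℝ) j
      nlinarith)))
  have htail1 : ∫ ξ in Set.Ici a, E ξ * ψ ξ ≤ 0 := by
    have h := tail_pairing_nonneg (fun ξ => -(E ξ * ψ ξ)) hgi.neg a (2*a) (by linarith)
      (fun η hη => ?_)
    · simp only [MeasureTheory.integral_neg] at h
      linarith
    · obtain ⟨j, h1, h2⟩ := hη
      have hkey : (E η * ψ η) + (E (η + 2*a) * ψ (η + 2*a)) ≤ 0 := by
        rw [hpair η]
        refine mul_nonpos_iff.mpr (Or.inr ⟨hcosS1 η j h1 h2, sub_nonneg.mpr (hBC η (by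
          have := Nat.cast_nonneg (α := ℝ) j
          nlinarith))⟩)
      linarith
  -- splitting the full integral
  have hIoiIci : ∫ ξ in Set.Ioi a, E ξ * ψ ξ = ∫ ξ in Set.Ici a, E ξ * ψ ξ :=
    setIntegral_congr_set Ioi_ae_eq_Ici
  have hleft : ∫ ξ in Set.Iic (-a), E ξ * ψ ξ = ∫ ξ in Set.Ici a, E ξ * ψ ξ := by
    have h := integral_comp_neg_Ioi a (fun ξ => E ξ * ψ ξ)
    simp only [hgeven] at h
    rw [← h, hIoiIci]
  have hmidsplit : (∫ ξ in Set.Ioc (-a) a, E ξ * ψ ξ) + ∫ ξ in Set.Ioi a, E ξ * ψ ξ =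
      ∫ ξ in Set.Ioi (-a), E ξ * ψ ξ := by
    rw [← setIntegral_union (Set.Ioc_disjoint_Ioi le_rfl) measurableSet_Ioi
      hgi.integrableOn hgi.integrableOn, Set.Ioc_union_Ioi_eq_Ioi (by linarith : -a ≤ a)]
  have hfull : u t x = (∫ ξ in Set.Ioc (-a) a, E ξ * ψ ξ) + 2 * ∫ ξ in Set.Ici a, E ξ * ψ ξ := by
    rw [hu' t x]
    have h1 : (∫ ξ in Set.Iic (-a), E ξ * ψ ξ) + (∫ ξ in Set.Ioi (-a), E ξ * ψ ξ)
        = ∫ ξ : ℝ, E ξ * ψ ξ := integral_Iic_add_Ioi hgi.integrableOn hgi.integrableOn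
    have : (∫ ξ : ℝ, Real.exp (t * (d * Jhat ξ - 1)) * (u₀hat ξ * Real.cos (2 * π * x * ξ)))
        = ∫ ξ : ℝ, E ξ * ψ ξ := rfl
    rw [this, ← h1, ← hmidsplit, hleft, hIoiIci]
    ring
  -- tail split at 3a
  have htailsplit : ∫ ξ in Set.Ici a, E ξ * ψ ξ =
      (∫ ξ in Set.Ico a (3*a), E ξ * ψ ξ) + ∫ ξ in Set.Ici (3*a), E ξ * ψ ξ := by
    rw [← setIntegral_union ?hd measurableSet_Ici hgi.integrableOn hgi.integrableOn,
      Set.Ico_union_Ici_eq_Ici (by linarith : a ≤ 3*a)]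
    case hd =>
      rw [Set.disjoint_left]
      rintro ξ ⟨_, h1⟩ h2
      exact absurd (Set.mem_Ici.mp h2) (not_le.mpr h1)
  -- middle bounds
  have hmid_low : Real.exp (t * (d * Jhat a - 1)) * A₀ ≤ ∫ ξ in Set.Ioc (-a) a, E ξ * ψ ξ := by
    rw [hA₀', ← MeasureTheory.integral_const_mul]
    refine setIntegral_mono_on ((hψi.const_mul _).integrableOn) hgi.integrableOn
      measurableSet_Ioc fun ξ hξ => ?_
    have hψnn : 0 ≤ ψ ξ := mul_nonneg (hu0 ξ) (hcos_mid ξ ⟨hξ.1.le, hξ.2⟩)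
    have hEE : E a ≤ E ξ := hEmono ξ a (by
      rw [abs_of_pos ha]
      exact abs_le.mpr ⟨by linarith [hξ.1], hξ.2⟩)
    exact mul_le_mul_of_nonneg_right hEE hψnn
  have hmid_up : ∫ ξ in Set.Ioc (-a) a, E ξ * ψ ξ ≤ Real.exp (t * (d - 1)) * A₀ := by
    rw [hA₀', ← MeasureTheory.integral_const_mul]
    refine setIntegral_mono_on hgi.integrableOn ((hψi.const_mul _).integrableOn)
      measurableSet_Ioc fun ξ hξ => ?_
    have hψnn : 0 ≤ ψ ξ := mul_nonneg (hu0 ξ) (hcos_mid ξ ⟨hξ.1.le, hξ.2⟩)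
    exact mul_le_mul_of_nonneg_right (hEub ξ) hψnn
  -- Ico part bound
  have hIco : Real.exp (t * (d * Jhat a - 1)) * A₁ ≤ ∫ ξ in Set.Ico a (3*a), E ξ * ψ ξ := by
    have hA₁'' : A₁ = ∫ ξ in Set.Ico a (3*a), ψ ξ := by
      rw [hA₁', setIntegral_congr_set Ico_ae_eq_Ioc]
    rw [hA₁'', ← MeasureTheory.integral_const_mul]
    refine setIntegral_mono_on ((hψi.const_mul _).integrableOn) hgi.integrableOn
      measurableSet_Ico fun ξ hξ => ?_
    have hψnp : ψ ξ ≤ 0 :=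
      mul_nonpos_iff.mpr (Or.inl ⟨hu0 ξ, hcos_neg ξ hξ.1 hξ.2.le⟩)
    have hEE : E ξ ≤ E a := hEmono a ξ (by
      rw [abs_of_pos ha, abs_of_pos (by linarith [hξ.1] : (0:ℝ) < ξ)]
      exact hξ.1)
    exact mul_le_mul_of_nonpos_right hEE hψnp
  constructor
  · rw [hfull]
    have hr : (A₀ + 2 * A₁) * Real.exp (t * (d * Jhat a - 1)) =
        Real.exp (t * (d * Jhat a - 1)) * A₀ + 2 * (Real.exp (t * (d * Jhat a - 1)) * A₁) := by
      ring
    rw [hr]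
    have htA : Real.exp (t * (d * Jhat a - 1)) * A₁ ≤ ∫ ξ in Set.Ici a, E ξ * ψ ξ := by
      rw [htailsplit]
      linarith [hIco, htail3]
    linarith [hmid_low, htA]
  · rw [hfull]
    have hr : A₀ * Real.exp (t * (d - 1)) = Real.exp (t * (d - 1)) * A₀ := by ring
    rw [hr]
    linarith [hmid_up, htail1]
end

section
/- Let û₀ ∈ L¹(ℝ) be nonnegative, even, and radially decreasing, let Ĵ(ξ) = e^{−2π²σ²ξ²}, d > 0, and let x₀ > 0 satisfy ∫_{−1/(8x₀)}^{1/(8x₀)} û₀(ξ)dξ ≥ (3/4)‖û₀‖_{L¹}. Then for all 0 ≤ x < x₀ and all t ≥ 0, u(t,x) = ∫_ℝ e^{t(d·Ĵ(ξ)−1)} û₀(ξ) cos(2πxξ) dξ ≥ ((3√2 − 2)/8) ‖û₀‖_{L¹(ℝ)} e^{t(d·Ĵ(1/(8x₀)) − 1)}. -/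
open MeasureTheory Real intervalIntegral

set_option maxHeartbeats 1000000

/-- Lower bound for u(t,x) for 0 ≤ x < x₀ when the mass of û₀ concentrates near 0. -/
theorem lower_bound_near_origin (u₀hat : ℝ → ℝ) (hu : Integrable u₀hat)
    (hu0 : ∀ ξ, 0 ≤ u₀hat ξ) (hueven : ∀ ξ, u₀hat (-ξ) = u₀hat ξ)
    (hudec : ∀ ξ₁ ξ₂ : ℝ, |ξ₁| ≤ |ξ₂| → u₀hat ξ₂ ≤ u₀hat ξ₁)
    (σ d : ℝ) (hσ : 0 < σ) (hd : 0 < d)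
    (Jhat : ℝ → ℝ) (hJ : ∀ ξ, Jhat ξ = Real.exp (-(2 * π ^ 2 * σ ^ 2 * ξ ^ 2)))
    (x₀ : ℝ) (hx₀ : 0 < x₀)
    (hmass : (3 / 4) * (∫ ξ : ℝ, |u₀hat ξ|)
      ≤ ∫ ξ in (-1 / (8 * x₀))..(1 / (8 * x₀)), u₀hat ξ)
    (u : ℝ → ℝ → ℝ)
    (hu' : ∀ t y, u t y = ∫ ξ : ℝ, Real.exp (t * (d * Jhat ξ - 1)) * (u₀hat ξ * Real.cos (2 * π * y * ξ))) :
    ∀ x t : ℝ, 0 ≤ x → x < x₀ → 0 ≤ t →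
      ((3 * Real.sqrt 2 - 2) / 8) * (∫ ξ : ℝ, |u₀hat ξ|)
          * Real.exp (t * (d * Jhat (1 / (8 * x₀)) - 1)) ≤ u t x := by
  intro x t hx hxx₀ ht
  have hπ := Real.pi_pos
  have hJe : Jhat = fun ξ => Real.exp (-(2 * π ^ 2 * σ ^ 2 * ξ ^ 2)) := funext hJ
  subst hJe
  set a : ℝ := 1 / (8 * x₀) with ha_def
  have ha : 0 < a := by positivity
  set Jh : ℝ → ℝ := fun ξ => Real.exp (-(2 * π ^ 2 * σ ^ 2 * ξ ^ 2)) with hJh_def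
  set E : ℝ → ℝ := fun ξ => Real.exp (t * (d * Jh ξ - 1)) with hE_def
  set C : ℝ := Real.exp (t * (d * Jh a - 1)) with hC_def
  have hC0 : 0 ≤ C := (Real.exp_pos _).le
  have hE0 : ∀ ξ, 0 ≤ E ξ := fun ξ => (Real.exp_pos _).le
  have hEmono : ∀ ξ₁ ξ₂ : ℝ, |ξ₁| ≤ |ξ₂| → E ξ₂ ≤ E ξ₁ := by
    intro ξ₁ ξ₂ h
    apply Real.exp_le_exp.2
    have hsq : ξ₁ ^ 2 ≤ ξ₂ ^ 2 := by
      rw [← sq_abs ξ₁, ← sq_abs ξ₂]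
      exact pow_le_pow_left₀ (abs_nonneg _) h 2
    have hJle : Jh ξ₂ ≤ Jh ξ₁ := by
      apply Real.exp_le_exp.2
      have := mul_le_mul_of_nonneg_left hsq (by positivity : (0:ℝ) ≤ 2 * π ^ 2 * σ ^ 2)
      linarith
    have h2 : d * Jh ξ₂ - 1 ≤ d * Jh ξ₁ - 1 := by
      have := mul_le_mul_of_nonneg_left hJle hd.le
      linarith
    exact mul_le_mul_of_nonneg_left h2 ht
  have hJ1 : ∀ ξ, Jh ξ ≤ 1 := by
    intro ξ
    apply Real.exp_le_one_iff.2
    nlinarith [sq_nonneg σ, sq_nonneg π, sq_nonneg ξ, sq_nonneg (σ * π * ξ)]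
  set K : ℝ := Real.exp (t * (d - 1)) with hK_def
  have hEK : ∀ ξ, E ξ ≤ K := by
    intro ξ
    apply Real.exp_le_exp.2
    have h2 : d * Jh ξ - 1 ≤ d - 1 := by
      have := mul_le_mul_of_nonneg_left (hJ1 ξ) hd.le
      linarith
    exact mul_le_mul_of_nonneg_left h2 ht
  have hum := hu.aestronglyMeasurable
  have hJcont : Continuous Jh :=
    Real.continuous_exp.comp ((continuous_const.mul (continuous_pow 2)).neg)
  have hEcont : Continuous E := by
    apply Real.continuous_exp.comp
    exact (continuous_const.mul ((continuous_const.mul hJcont).sub continuous_const))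
  -- the set
  set s : Set ℝ := {ξ : ℝ | |ξ| ≤ a} with hs_def
  have hseq : s = Set.Icc (-a) a := by
    ext ξ; simp [hs_def, abs_le]
  have hs : MeasurableSet s := hseq ▸ measurableSet_Icc
  -- the comparison function
  set h : ℝ → ℝ := fun ξ => if |ξ| ≤ a then Real.sqrt 2 / 2 else -1 with hh_def
  have hsqrt2 : (0:ℝ) ≤ Real.sqrt 2 := Real.sqrt_nonneg 2
  have hsqrt2sq : Real.sqrt 2 ^ 2 = 2 := Real.sq_sqrt (by norm_num)
  have hsqrt2le : Real.sqrt 2 ≤ 2 := by nlinarith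
  have hhbd : ∀ ξ, |h ξ| ≤ 1 := by
    intro ξ
    have : h ξ = if |ξ| ≤ a then Real.sqrt 2 / 2 else -1 := rfl
    rw [this]
    by_cases hc : |ξ| ≤ a
    · rw [if_pos hc, abs_le]; constructor <;> nlinarith
    · rw [if_neg hc, abs_le]; constructor <;> nlinarith
  have hhmeas : Measurable h := by
    apply Measurable.ite _ measurable_const measurable_const
    exact measurableSet_le (measurable_abs) measurable_const
  -- integrabilities
  have hf_int : Integrable (fun ξ => (E ξ * Real.cos (2 * π * x * ξ)) * u₀hat ξ) := by
    have hcc : Continuous fun ξ : ℝ => Real.cos (2 * π * x * ξ) :=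
      Real.continuous_cos.comp (continuous_const.mul continuous_id)
    apply hu.bdd_mul ((hEcont.mul hcc).aestronglyMeasurable)
    refine ae_of_all _ fun ξ => (?_ : ‖E ξ * Real.cos (2 * π * x * ξ)‖ ≤ K)
    have h1 : |Real.cos (2 * π * x * ξ)| ≤ 1 := Real.abs_cos_le_one _
    rw [Real.norm_eq_abs, abs_mul, abs_of_nonneg (hE0 ξ)]
    calc E ξ * |Real.cos (2 * π * x * ξ)| ≤ E ξ * 1 :=
          mul_le_mul_of_nonneg_left h1 (hE0 ξ)
      _ = E ξ := mul_one _
      _ ≤ K := hEK ξ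
  have hg_int : Integrable (fun ξ => u₀hat ξ * h ξ) := by
    have := hu.bdd_mul hhmeas.aestronglyMeasurable (c := 1) (ae_of_all _ fun ξ => by
      rw [Real.norm_eq_abs]; exact hhbd ξ)
    exact this.congr (ae_of_all _ fun ξ => mul_comm _ _)
  -- pointwise bound
  have hpt : ∀ ξ, C * (u₀hat ξ * h ξ) ≤ (E ξ * Real.cos (2 * π * x * ξ)) * u₀hat ξ := by
    intro ξ
    by_cases hξ : |ξ| ≤ a
    · have hCE : C ≤ E ξ := by
        have := hEmono ξ a (by rwa [abs_of_pos ha])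
        simpa [hC_def] using this
      have hcos : Real.sqrt 2 / 2 ≤ Real.cos (2 * π * x * ξ) := by
        have harg : |2 * π * x * ξ| ≤ π / 4 := by
          rw [abs_mul, abs_of_nonneg (by positivity : (0:ℝ) ≤ 2 * π * x)]
          calc 2 * π * x * |ξ| ≤ 2 * π * x₀ * a := by
                apply mul_le_mul (by nlinarith) hξ (abs_nonneg _) (by positivity)
            _ = π / 4 := by field_simp [ha_def]; rw [ha_def]; field_simp; norm_num
        have h1 : Real.cos (π / 4) ≤ Real.cos |2 * π * x * ξ| := by
          apply Real.cos_le_cos_of_nonneg_of_le_pi (abs_nonneg _) (by nlinarith) harg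
        rw [Real.cos_abs, Real.cos_pi_div_four] at h1
        exact h1
      have hh : h ξ = Real.sqrt 2 / 2 := if_pos hξ
      rw [hh]
      have key : C * (Real.sqrt 2 / 2) ≤ E ξ * Real.cos (2 * π * x * ξ) :=
        mul_le_mul hCE hcos (by positivity) (hE0 ξ)
      nlinarith [hu0 ξ]
    · have hEC : E ξ ≤ C := by
        have := hEmono a ξ (by rw [abs_of_pos ha]; exact le_of_not_ge hξ)
        simpa [hC_def] using this
      have hcos : -1 ≤ Real.cos (2 * π * x * ξ) := Real.neg_one_le_cos _
      have hh : h ξ = -1 := if_neg hξ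
      rw [hh]
      nlinarith [hu0 ξ, hE0 ξ, mul_nonneg (hE0 ξ) (hu0 ξ)]
  -- integral computations
  set M : ℝ := ∫ ξ : ℝ, |u₀hat ξ| with hM_def
  have hM : (∫ ξ : ℝ, u₀hat ξ) = M := by
    apply MeasureTheory.integral_congr_ae (ae_of_all _ fun ξ => (abs_of_nonneg (hu0 ξ)).symm)
  set I : ℝ := ∫ ξ in s, u₀hat ξ with hI_def
  set T : ℝ := ∫ ξ in sᶜ, u₀hat ξ with hT_def
  have hIT : I + T = M := by rw [hI_def, hT_def, integral_add_compl hs hu, hM]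
  have hT0 : 0 ≤ T := setIntegral_nonneg hs.compl fun ξ _ => hu0 ξ
  have hI34 : 3 / 4 * M ≤ I := by
    have h1 : (∫ ξ in (-1 / (8 * x₀))..(1 / (8 * x₀)), u₀hat ξ) = I := by
      rw [show (-1 / (8 * x₀) : ℝ) = -a by rw [ha_def]; ring]
      rw [intervalIntegral.integral_of_le (by linarith : -a ≤ a)]
      rw [hI_def, hseq, integral_Icc_eq_integral_Ioc]
    rw [h1] at hmass
    exact hmass
  have hginteval : (∫ ξ : ℝ, C * (u₀hat ξ * h ξ)) = C * (I * (Real.sqrt 2 / 2) - T) := by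
    rw [MeasureTheory.integral_const_mul]
    congr 1
    rw [← integral_add_compl hs hg_int]
    have e1 : (∫ ξ in s, u₀hat ξ * h ξ) = I * (Real.sqrt 2 / 2) := by
      rw [setIntegral_congr_fun hs (fun ξ hξ => by
        simp only [hh_def]; rw [if_pos (show |ξ| ≤ a from hξ)] : Set.EqOn (fun ξ => u₀hat ξ * h ξ)
          (fun ξ => u₀hat ξ * (Real.sqrt 2 / 2)) s)]
      rw [MeasureTheory.integral_mul_const]
    have e2 : (∫ ξ in sᶜ, u₀hat ξ * h ξ) = -T := by
      rw [setIntegral_congr_fun hs.compl (fun ξ hξ => by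
        simp only [hh_def]; rw [if_neg (show ¬ |ξ| ≤ a from hξ)] : Set.EqOn (fun ξ => u₀hat ξ * h ξ)
          (fun ξ => u₀hat ξ * (-1)) sᶜ)]
      rw [MeasureTheory.integral_mul_const, hT_def]; ring
    rw [e1, e2]; ring
  -- put it together
  rw [hu' t x]
  have step1 : (∫ ξ : ℝ, C * (u₀hat ξ * h ξ)) ≤
      ∫ ξ : ℝ, Real.exp (t * (d * Jh ξ - 1)) * (u₀hat ξ * Real.cos (2 * π * x * ξ)) := by
    have : (∫ ξ : ℝ, Real.exp (t * (d * Jh ξ - 1)) * (u₀hat ξ * Real.cos (2 * π * x * ξ)))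
        = ∫ ξ : ℝ, (E ξ * Real.cos (2 * π * x * ξ)) * u₀hat ξ := by
      apply MeasureTheory.integral_congr_ae (ae_of_all _ fun ξ => by simp only [hE_def]; ring)
    rw [this]
    exact integral_mono_ae (hg_int.const_mul C) hf_int (ae_of_all _ hpt)
  refine le_trans ?_ step1
  rw [hginteval]
  have hkey : (3 * Real.sqrt 2 - 2) / 8 * M ≤ I * (Real.sqrt 2 / 2) - T := by
    nlinarith [mul_le_mul_of_nonneg_left hI34 (by positivity : (0:ℝ) ≤ Real.sqrt 2 / 2 + 1)]
  calc (3 * Real.sqrt 2 - 2) / 8 * M * C ≤ (I * (Real.sqrt 2 / 2) - T) * C :=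
        mul_le_mul_of_nonneg_right hkey hC0
    _ = C * (I * (Real.sqrt 2 / 2) - T) := mul_comm _ _
end

section
/- For every x > 0, ∫_0^{3/(4x)} e^{−ξ} cos(2πxξ)/√ξ dξ > e^{−1/(4x)} · FresnelC(√3)/√x > 0; in particular the function û₀(ξ) = e^{−|ξ|}/√|ξ| satisfies ∫_0^{3/(4x)} û₀(ξ) cos(2πxξ) dξ > 0 for all x > 0. -/
open Real intervalIntegral

/-- The Fresnel cosine integral. -/
noncomputable def FresnelC (y : ℝ) : ℝ := ∫ t in (0 : ℝ)..y, Real.cos (π * t ^ 2 / 2)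

section aux
open Set MeasureTheory

theorem sqrt3_gt_one' : (1:ℝ) < Real.sqrt 3 := by
  rw [show (1:ℝ) = Real.sqrt 1 from (Real.sqrt_one).symm]
  exact Real.sqrt_lt_sqrt (by norm_num) (by norm_num)

theorem poly_int' (c : ℝ) : (∫ t in (0:ℝ)..1, (1 - c * t ^ 4)) = 1 - c / 5 := by
  rw [intervalIntegral.integral_sub intervalIntegrable_const
    (by apply Continuous.intervalIntegrable; continuity),
    intervalIntegral.integral_const_mul, integral_pow]
  norm_num
  ring

theorem tcos_int' : (∫ t in (1:ℝ)..(Real.sqrt 3), t * Real.cos (π * t ^ 2 / 2)) = -2 / π := by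
  have hd : ∀ t : ℝ, HasDerivAt (fun t => Real.sin (π * t ^ 2 / 2) / π)
      (t * Real.cos (π * t ^ 2 / 2)) t := by
    intro t
    have hinner : HasDerivAt (fun t : ℝ => π * t ^ 2 / 2) (π * t) t := by
      have := ((hasDerivAt_pow 2 t).const_mul π).div_const 2
      refine this.congr_deriv ?_
      push_cast; ring
    have := ((Real.hasDerivAt_sin (π * t ^ 2 / 2)).comp t hinner).div_const π
    refine this.congr_deriv ?_
    field_simp [Real.pi_ne_zero]
  rw [intervalIntegral.integral_eq_sub_of_hasDerivAt (fun t _ => hd t)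
    (by apply Continuous.intervalIntegrable; continuity)]
  rw [Real.sq_sqrt (by norm_num : (3:ℝ) ≥ 0)]
  rw [show π * 3 / 2 = π + π / 2 by ring, Real.sin_add]
  simp [Real.sin_pi_div_two]
  field_simp
  ring

theorem cos_nonpos_on' (t : ℝ) (ht : t ∈ Set.Icc (1:ℝ) (Real.sqrt 3)) :
    Real.cos (π * t ^ 2 / 2) ≤ 0 := by
  have h1 : (1:ℝ) ≤ t ^ 2 := by nlinarith [ht.1]
  have h3 : t ^ 2 ≤ 3 := by
    nlinarith [ht.2, Real.sq_sqrt (by norm_num : (3:ℝ) ≥ 0), Real.sqrt_nonneg 3, ht.1]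
  have hπ0 := Real.pi_pos
  apply Real.cos_nonpos_of_pi_div_two_le_of_le
  · nlinarith
  · nlinarith

theorem cos_nonneg_on' (t : ℝ) (ht : t ∈ Set.Icc (0:ℝ) 1) :
    0 ≤ Real.cos (π * t ^ 2 / 2) := by
  have h1 : t ^ 2 ≤ 1 := by nlinarith [ht.1, ht.2]
  have h0 : 0 ≤ t ^ 2 := sq_nonneg t
  have hπ0 := Real.pi_pos
  apply Real.cos_nonneg_of_mem_Icc
  constructor <;> [nlinarith; nlinarith]

theorem FresnelC_sqrt3_pos : 0 < FresnelC (Real.sqrt 3) := by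
  have h13 : (1:ℝ) ≤ Real.sqrt 3 := sqrt3_gt_one'.le
  have hcont : Continuous fun t : ℝ => Real.cos (π * t ^ 2 / 2) := by continuity
  have hsplit : FresnelC (Real.sqrt 3) =
      (∫ t in (0:ℝ)..1, Real.cos (π * t ^ 2 / 2)) +
      ∫ t in (1:ℝ)..(Real.sqrt 3), Real.cos (π * t ^ 2 / 2) := by
    rw [FresnelC, ← intervalIntegral.integral_add_adjacent_intervals
      (hcont.intervalIntegrable 0 1) (hcont.intervalIntegrable 1 _)]
  have hA : (1 : ℝ) - (π ^ 2 / 8) / 5 ≤ ∫ t in (0:ℝ)..1, Real.cos (π * t ^ 2 / 2) := by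
    rw [← poly_int' (π ^ 2 / 8)]
    apply intervalIntegral.integral_mono_on (by norm_num)
      (by apply Continuous.intervalIntegrable; continuity)
      (hcont.intervalIntegrable 0 1)
    intro t _
    calc 1 - π ^ 2 / 8 * t ^ 4 = 1 - (π * t ^ 2 / 2) ^ 2 / 2 := by ring
      _ ≤ Real.cos (π * t ^ 2 / 2) := Real.one_sub_sq_div_two_le_cos
  have hB : -2 / π ≤ ∫ t in (1:ℝ)..(Real.sqrt 3), Real.cos (π * t ^ 2 / 2) := by
    rw [← tcos_int']
    apply intervalIntegral.integral_mono_on h13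
      (by apply Continuous.intervalIntegrable; continuity)
      (hcont.intervalIntegrable 1 _)
    intro t ht
    nlinarith [cos_nonpos_on' t ht, ht.1]
  have hπ := Real.pi_gt_d6
  have hπ' := Real.pi_lt_d2
  have hπ0 := Real.pi_pos
  have key : -2 / π > -(1 - (π ^ 2 / 8) / 5) := by
    rw [gt_iff_lt, neg_lt, neg_div, neg_neg, div_lt_iff₀ hπ0]
    nlinarith
  linarith [hsplit ▸ (add_le_add hA hB : (1 - (π ^ 2 / 8) / 5) + -2/π ≤ _)]

theorem img' (x : ℝ) (hx : 0 < x) :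
    (fun t : ℝ => t ^ 2 / (4 * x)) '' Set.Ioc 0 (Real.sqrt 3) = Set.Ioc 0 (3 / (4 * x)) := by
  ext y
  simp only [Set.mem_image, Set.mem_Ioc]
  constructor
  · rintro ⟨t, ⟨ht0, ht3⟩, rfl⟩
    constructor
    · positivity
    · have h3 : t ^ 2 ≤ 3 := by
        nlinarith [Real.sq_sqrt (by norm_num : (3:ℝ) ≥ 0)]
      exact div_le_div_of_nonneg_right h3 (by positivity) |>.trans_eq rfl
  · rintro ⟨hy0, hyb⟩
    refine ⟨Real.sqrt (4 * x * y), ⟨Real.sqrt_pos.2 (by positivity), ?_⟩, ?_⟩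
    · apply Real.sqrt_le_sqrt
      rw [le_div_iff₀ (by positivity)] at hyb
      nlinarith
    · rw [Real.sq_sqrt (by positivity)]
      field_simp

theorem cov' (x : ℝ) (hx : 0 < x) :
    (∫ ξ in (0 : ℝ)..(3 / (4 * x)), Real.exp (-ξ) * Real.cos (2 * π * x * ξ) / Real.sqrt ξ)
      = (∫ t in (0 : ℝ)..(Real.sqrt 3), Real.exp (-(t ^ 2 / (4 * x))) * Real.cos (π * t ^ 2 / 2))
        / Real.sqrt x := by
  have hb : (0:ℝ) ≤ 3 / (4 * x) := by positivity
  have h3 : (0:ℝ) ≤ Real.sqrt 3 := Real.sqrt_nonneg 3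
  rw [integral_of_le hb, integral_of_le h3, ← img' x hx]
  rw [MeasureTheory.integral_image_eq_integral_abs_deriv_smul measurableSet_Ioc
    (f' := fun t => t / (2 * x)) ?_ ?_]
  · rw [eq_div_iff (by positivity : Real.sqrt x ≠ 0), ← MeasureTheory.integral_mul_const]
    apply MeasureTheory.setIntegral_congr_fun measurableSet_Ioc
    intro t ht
    have ht0 : 0 < t := ht.1
    have h4 : Real.sqrt (4 * x) = 2 * Real.sqrt x := by
      rw [show (4:ℝ) * x = 2 ^ 2 * x by ring, Real.sqrt_mul (by positivity),
        Real.sqrt_sq (by norm_num)]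
    have hst : Real.sqrt (t ^ 2 / (4 * x)) = t / (2 * Real.sqrt x) := by
      rw [Real.sqrt_div (by positivity), h4, Real.sqrt_sq ht0.le]
    have harg : 2 * π * x * (t ^ 2 / (4 * x)) = π * t ^ 2 / 2 := by
      field_simp; ring
    simp only [smul_eq_mul, harg, hst, abs_of_pos (show (0:ℝ) < t / (2 * x) by positivity)]
    have hsx : Real.sqrt x > 0 := Real.sqrt_pos.2 hx
    field_simp
    linear_combination (cos (t ^ 2 * π / 2)) *
      Real.mul_self_sqrt hx.le
  · intro t _
    have h := (hasDerivAt_pow 2 t).div_const (4 * x)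
    refine h.hasDerivWithinAt.congr_deriv ?_
    push_cast
    field_simp
    ring
  · intro a ha b hb hab
    simp only at hab
    have : a ^ 2 = b ^ 2 := by
      field_simp at hab; linarith
    calc a = Real.sqrt (a ^ 2) := (Real.sqrt_sq ha.1.le).symm
      _ = Real.sqrt (b ^ 2) := by rw [this]
      _ = b := Real.sqrt_sq hb.1.le

theorem key_lt (x : ℝ) (hx : 0 < x) :
    Real.exp (-(1 / (4 * x))) * FresnelC (Real.sqrt 3)
      < ∫ t in (0 : ℝ)..(Real.sqrt 3), Real.exp (-(t ^ 2 / (4 * x))) * Real.cos (π * t ^ 2 / 2) := by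
  have h13 : (1:ℝ) ≤ Real.sqrt 3 := sqrt3_gt_one'.le
  have hcont : Continuous fun t : ℝ =>
      Real.exp (-(t ^ 2 / (4 * x))) * Real.cos (π * t ^ 2 / 2) := by continuity
  have hcont' : Continuous fun t : ℝ =>
      Real.exp (-(1 / (4 * x))) * Real.cos (π * t ^ 2 / 2) := by continuity
  have hsplit : (∫ t in (0 : ℝ)..(Real.sqrt 3),
        Real.exp (-(t ^ 2 / (4 * x))) * Real.cos (π * t ^ 2 / 2)) =
      (∫ t in (0:ℝ)..1, Real.exp (-(t ^ 2 / (4 * x))) * Real.cos (π * t ^ 2 / 2)) +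
      ∫ t in (1:ℝ)..(Real.sqrt 3), Real.exp (-(t ^ 2 / (4 * x))) * Real.cos (π * t ^ 2 / 2) := by
    rw [← intervalIntegral.integral_add_adjacent_intervals
      (hcont.intervalIntegrable 0 1) (hcont.intervalIntegrable 1 _)]
  have hsplitF : Real.exp (-(1 / (4 * x))) * FresnelC (Real.sqrt 3) =
      (∫ t in (0:ℝ)..1, Real.exp (-(1 / (4 * x))) * Real.cos (π * t ^ 2 / 2)) +
      ∫ t in (1:ℝ)..(Real.sqrt 3), Real.exp (-(1 / (4 * x))) * Real.cos (π * t ^ 2 / 2) := by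
    have h1 : Real.exp (-(1 / (4 * x))) * FresnelC (Real.sqrt 3) =
        ∫ t in (0:ℝ)..(Real.sqrt 3), Real.exp (-(1 / (4 * x))) * Real.cos (π * t ^ 2 / 2) := by
      rw [FresnelC, ← intervalIntegral.integral_const_mul]
    rw [h1]
    exact (intervalIntegral.integral_add_adjacent_intervals
      (hcont'.intervalIntegrable 0 1) (hcont'.intervalIntegrable 1 _)).symm
  have hA : (∫ t in (0:ℝ)..1, Real.exp (-(1 / (4 * x))) * Real.cos (π * t ^ 2 / 2)) <
      ∫ t in (0:ℝ)..1, Real.exp (-(t ^ 2 / (4 * x))) * Real.cos (π * t ^ 2 / 2) := by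
    apply intervalIntegral.integral_lt_integral_of_continuousOn_of_le_of_exists_lt (by norm_num)
      hcont'.continuousOn hcont.continuousOn
    · intro t ht
      have hc := cos_nonneg_on' t ⟨ht.1.le, ht.2⟩
      have he : Real.exp (-(1 / (4 * x))) ≤ Real.exp (-(t ^ 2 / (4 * x))) := by
        apply Real.exp_le_exp.2
        have : t ^ 2 ≤ 1 := by nlinarith [ht.1, ht.2]
        rw [neg_le_neg_iff]
        apply div_le_div_of_nonneg_right this (by positivity) |>.trans_eq rfl
      exact mul_le_mul_of_nonneg_right he hc
    · refine ⟨0, ⟨le_refl 0, by norm_num⟩, ?_⟩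
      norm_num
      exact hx
  have hB : (∫ t in (1:ℝ)..(Real.sqrt 3), Real.exp (-(1 / (4 * x))) * Real.cos (π * t ^ 2 / 2)) ≤
      ∫ t in (1:ℝ)..(Real.sqrt 3), Real.exp (-(t ^ 2 / (4 * x))) * Real.cos (π * t ^ 2 / 2) := by
    apply intervalIntegral.integral_mono_on h13
      (hcont'.intervalIntegrable 1 _) (hcont.intervalIntegrable 1 _)
    intro t ht
    have hc := cos_nonpos_on' t ht
    have he : Real.exp (-(t ^ 2 / (4 * x))) ≤ Real.exp (-(1 / (4 * x))) := by
      apply Real.exp_le_exp.2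
      have h1 : (1:ℝ) ≤ t ^ 2 := by nlinarith [ht.1]
      rw [neg_le_neg_iff]
      exact div_le_div_of_nonneg_right h1 (by positivity) |>.trans_eq rfl
    exact mul_le_mul_of_nonpos_right he hc
  rw [hsplit, hsplitF]
  exact add_lt_add_of_lt_of_le hA hB
end aux

/-- Positivity of ∫₀^{3/(4x)} e^{−ξ} cos(2πxξ)/√ξ dξ and verification of (H2) for
û₀(ξ) = e^{−|ξ|}/√|ξ|. -/
theorem example_H2 (x : ℝ) (hx : 0 < x) :
    (∫ ξ in (0 : ℝ)..(3 / (4 * x)), Real.exp (-ξ) * Real.cos (2 * π * x * ξ) / Real.sqrt ξ)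
        > Real.exp (-(1 / (4 * x))) * FresnelC (Real.sqrt 3) / Real.sqrt x ∧
    Real.exp (-(1 / (4 * x))) * FresnelC (Real.sqrt 3) / Real.sqrt x > 0 ∧
    0 < ∫ ξ in (0 : ℝ)..(3 / (4 * x)),
        (Real.exp (-|ξ|) / Real.sqrt |ξ|) * Real.cos (2 * π * x * ξ) := by
  have hsx : 0 < Real.sqrt x := Real.sqrt_pos.2 hx
  have hF := FresnelC_sqrt3_pos
  have hb : (0:ℝ) ≤ 3 / (4 * x) := by positivity
  have h1 : (∫ ξ in (0 : ℝ)..(3 / (4 * x)),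
      Real.exp (-ξ) * Real.cos (2 * π * x * ξ) / Real.sqrt ξ)
      > Real.exp (-(1 / (4 * x))) * FresnelC (Real.sqrt 3) / Real.sqrt x := by
    rw [cov' x hx, gt_iff_lt, div_lt_div_iff_of_pos_right hsx]
    exact key_lt x hx
  have h2 : Real.exp (-(1 / (4 * x))) * FresnelC (Real.sqrt 3) / Real.sqrt x > 0 := by
    positivity
  refine ⟨h1, h2, ?_⟩
  have heq : Set.EqOn
      (fun ξ : ℝ => (Real.exp (-|ξ|) / Real.sqrt |ξ|) * Real.cos (2 * π * x * ξ))
      (fun ξ : ℝ => Real.exp (-ξ) * Real.cos (2 * π * x * ξ) / Real.sqrt ξ)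
      (Set.uIcc 0 (3 / (4 * x))) := by
    intro ξ hξ
    rw [Set.uIcc_of_le hb] at hξ
    simp only [abs_of_nonneg hξ.1]
    ring
  rw [intervalIntegral.integral_congr heq]
  linarith
end

section
/- The function û₀(ξ) = e^{−|ξ|}/√|ξ| is integrable on ℝ, and its inverse Fourier transform is u₀(x) = ∫_ℝ (e^{−|ξ|}/√|ξ|) e^{2πixξ} dξ = √(2π) · √((√(1+4π²x²) + 1)/(1+4π²x²)), which is a positive, bounded, continuous function of x. -/
open MeasureTheory Real Complex

open Set in
private lemma aux_int_Ioi : IntegrableOn (fun ξ : ℝ => Real.exp (-ξ) / Real.sqrt ξ) (Ioi 0) := by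
  have h := Real.GammaIntegral_convergent (by norm_num : (0:ℝ) < 1/2)
  refine h.congr_fun (fun x hx => ?_) measurableSet_Ioi
  rw [mem_Ioi] at hx
  dsimp only
  rw [Real.sqrt_eq_rpow, show (1/2 - 1 : ℝ) = -(1/2) by norm_num, Real.rpow_neg hx.le,
    div_eq_mul_inv]
  ring

open Set in
private lemma aux_int : Integrable (fun ξ : ℝ => Real.exp (-|ξ|) / Real.sqrt |ξ|) := by
  have h1 : IntegrableOn (fun ξ : ℝ => Real.exp (-|ξ|) / Real.sqrt |ξ|) (Ioi 0) := by
    refine aux_int_Ioi.congr_fun (fun x hx => ?_) measurableSet_Ioi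
    rw [mem_Ioi] at hx; rw [abs_of_pos hx]
  have h2 : IntegrableOn (fun ξ : ℝ => Real.exp (-|ξ|) / Real.sqrt |ξ|) (Iic 0) := by
    rw [← Measure.map_neg_eq_self (volume : Measure ℝ)]
    have m : MeasurableEmbedding fun x : ℝ => -x := (Homeomorph.neg ℝ).measurableEmbedding
    rw [m.integrableOn_map_iff]
    simp_rw [Function.comp_def, abs_neg, neg_preimage, neg_Iic, neg_zero]
    exact Iff.mpr integrableOn_Ici_iff_integrableOn_Ioi h1
  have h3 := h2.union h1
  rwa [Iic_union_Ioi, integrableOn_univ] at h3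

private lemma aux_intC (c : ℝ) :
    Integrable (fun ξ : ℝ => ((Real.exp (-|ξ|) / Real.sqrt |ξ|) : ℂ)
      * Complex.exp ((c : ℂ) * ξ * Complex.I)) := by
  have h : Integrable (fun ξ : ℝ => Complex.exp ((c : ℂ) * ξ * Complex.I)
      * ((Real.exp (-|ξ|) / Real.sqrt |ξ| : ℝ) : ℂ)) := by
    refine (aux_int.ofReal (𝕜 := ℂ)).bdd_mul (c := 1) ?_ ?_
    · apply Continuous.aestronglyMeasurable
      fun_prop
    · refine Filter.Eventually.of_forall fun ξ => le_of_eq ?_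
      rw [show (c:ℂ) * ξ * Complex.I = ((c * ξ : ℝ) : ℂ) * Complex.I by push_cast; ring]
      exact Complex.norm_exp_ofReal_mul_I _
  refine h.congr (Filter.Eventually.of_forall fun ξ => ?_)
  push_cast
  ring

open Set in
private lemma half_gauss {b : ℂ} (hb : 0 < b.re) :
    ∫ x in Ioi (0:ℝ), Complex.exp (-b * x^2) = (1/2 : ℂ) * ∫ x : ℝ, Complex.exp (-b * x^2) := by
  have hint := integrable_cexp_neg_mul_sq hb
  have h1 := intervalIntegral.integral_Iic_add_Ioi (b := (0:ℝ))
    hint.integrableOn hint.integrableOn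
  have h2 : ∫ x in Iic (0:ℝ), Complex.exp (-b * x^2)
      = ∫ x in Ioi (0:ℝ), Complex.exp (-b * x^2) := by
    have h3 := integral_comp_neg_Ioi 0 (fun x : ℝ => Complex.exp (-b * x^2))
    rw [neg_zero] at h3
    rw [← h3]
    refine setIntegral_congr_fun measurableSet_Ioi (fun x _ => ?_)
    push_cast
    ring_nf
  rw [h2] at h1
  rw [← h1]; ring

open Set in
private lemma main_integral (c : ℝ) :
    ∫ ξ : ℝ, ((Real.exp (-|ξ|) / Real.sqrt |ξ|) : ℂ) * Complex.exp ((c : ℂ) * ξ * Complex.I)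
      = (∫ x : ℝ, Complex.exp (-(1 - c*Complex.I) * x^2))
        + ∫ x : ℝ, Complex.exp (-(1 + c*Complex.I) * x^2) := by
  set F : ℝ → ℝ → ℂ := fun c ξ =>
    ((Real.exp (-|ξ|) / Real.sqrt |ξ|) : ℂ) * Complex.exp ((c : ℂ) * ξ * Complex.I) with hF
  set G : ℝ → ℂ := fun y => ((Real.sqrt y : ℝ) : ℂ)⁻¹
    * (Complex.exp (-(1 - c*Complex.I) * y) + Complex.exp (-(1 + c*Complex.I) * y)) with hG
  have hb1 : (0:ℝ) < (1 - (c:ℂ)*Complex.I).re := by simp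
  have hb2 : (0:ℝ) < (1 + (c:ℂ)*Complex.I).re := by simp
  have step1 : ∫ ξ : ℝ, F c ξ = ∫ ξ in Ioi (0:ℝ), (F c ξ + F (-c) ξ) := by
    rw [← intervalIntegral.integral_Iic_add_Ioi (b := (0:ℝ))
      (aux_intC c).integrableOn (aux_intC c).integrableOn]
    have hneg := integral_comp_neg_Ioi 0 (F c)
    rw [neg_zero] at hneg
    have hFneg : (fun ξ : ℝ => F c (-ξ)) = F (-c) := by
      funext ξ; simp only [hF, abs_neg]; push_cast; ring_nf
    rw [← hneg, hFneg,
      integral_add ((aux_intC c).integrableOn) ((aux_intC (-c)).integrableOn)]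
    ring
  have step2 : ∫ ξ in Ioi (0:ℝ), (F c ξ + F (-c) ξ) = ∫ y in Ioi (0:ℝ), G y := by
    refine setIntegral_congr_fun measurableSet_Ioi (fun ξ hξ => ?_)
    rw [mem_Ioi] at hξ
    simp only [hF, hG, abs_of_pos hξ]
    have e1 : (-(1 - (c:ℂ)*Complex.I) * ξ) = ((-ξ : ℝ) : ℂ) + (c:ℂ)*ξ*Complex.I := by
      push_cast; ring
    have e2 : (-(1 + (c:ℂ)*Complex.I) * ξ) = ((-ξ : ℝ) : ℂ) + ((-c : ℝ):ℂ)*ξ*Complex.I := by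
      push_cast; ring
    rw [e1, e2, Complex.exp_add, Complex.exp_add, ← Complex.ofReal_exp]
    ring
  have step3 : ∫ y in Ioi (0:ℝ), G y
      = ∫ x in Ioi (0:ℝ), (2:ℂ) * (Complex.exp (-(1 - c*Complex.I) * x^2)
          + Complex.exp (-(1 + c*Complex.I) * x^2)) := by
    rw [← integral_comp_rpow_Ioi G (p := 2) two_ne_zero]
    refine setIntegral_congr_fun measurableSet_Ioi (fun x hx => ?_)
    rw [mem_Ioi] at hx
    have h2 : x ^ (2:ℝ) = x^2 := by
      rw [← Real.rpow_natCast x 2]; norm_num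
    have h1 : x ^ ((2:ℝ) - 1) = x := by
      norm_num
    rw [h2, h1]
    simp only [hG, Real.sqrt_sq hx.le]
    have hxc : (x:ℂ) ≠ 0 := by exact_mod_cast hx.ne'
    rw [real_smul]
    push_cast
    field_simp
    simp only [abs_two, Complex.ofReal_ofNat]
    ring
  rw [step1, step2, step3, integral_const_mul,
    integral_add ((integrable_cexp_neg_mul_sq hb1).integrableOn)
      ((integrable_cexp_neg_mul_sq hb2).integrableOn),
    half_gauss hb1, half_gauss hb2]
  ring

private lemma gauss_value (c : ℝ) :
    (∫ x : ℝ, Complex.exp (-(1 - c*Complex.I) * x^2))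
      + (∫ x : ℝ, Complex.exp (-(1 + c*Complex.I) * x^2))
    = ((Real.sqrt (2*π) * Real.sqrt ((Real.sqrt (1 + c^2) + 1) / (1 + c^2)) : ℝ) : ℂ) := by
  have hb1 : (0:ℝ) < (1 - (c:ℂ)*Complex.I).re := by simp
  have hb2 : (0:ℝ) < (1 + (c:ℂ)*Complex.I).re := by simp
  rw [integral_gaussian_complex hb1, integral_gaussian_complex hb2]
  set w : ℂ := (π:ℂ) / (1 - c*Complex.I) with hw
  have hs : (0:ℝ) < 1 + c^2 := by positivity
  have hnorm : Complex.normSq (1 - (c:ℂ)*Complex.I) = 1 + c^2 := by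
    simp [Complex.normSq_apply]; ring
  have hwre : w.re = π / (1 + c^2) := by
    rw [hw, Complex.div_re, hnorm]
    simp
  have hwrepos : 0 < w.re := by rw [hwre]; positivity
  have hwne : w ≠ 0 := fun h => by simp [h] at hwrepos
  have harg : w.arg ≠ π := by
    intro h
    rw [Complex.arg_eq_pi_iff] at h
    linarith [h.1]
  have hconj : (π:ℂ) / (1 + c*Complex.I) = (starRingEnd ℂ) w := by
    rw [hw, map_div₀]
    congr 1
    · exact (Complex.conj_ofReal _).symm
    · simp [Complex.ext_iff]
  rw [hconj]
  have hhalf : ((1:ℂ)/2) = (starRingEnd ℂ) ((1:ℂ)/2) := by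
    simp [Complex.ext_iff]
  rw [show ((starRingEnd ℂ) w) ^ ((1:ℂ)/2) = (starRingEnd ℂ) (w ^ ((1:ℂ)/2)) by
    rw [Complex.conj_cpow _ _ harg, ← hhalf]]
  set z : ℂ := w ^ ((1:ℂ)/2) with hz
  rw [Complex.add_conj]
  norm_cast
  have hzsq : z ^ 2 = w := by
    rw [hz, show ((1:ℂ)/2) = ((2:ℕ):ℂ)⁻¹ by norm_num]
    exact Complex.cpow_nat_inv_pow w two_ne_zero
  have hre2 : z.re^2 - z.im^2 = w.re := by
    rw [← hzsq, pow_two z, Complex.mul_re]; ring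
  have habsw : ‖w‖ = π / Real.sqrt (1 + c^2) := by
    rw [hw, norm_div, Complex.norm_real, Real.norm_eq_abs, abs_of_pos Real.pi_pos,
      Complex.norm_def, hnorm]
  have habs : z.re^2 + z.im^2 = ‖w‖ := by
    have h1 : ‖w‖ = ‖z‖ ^ 2 := by
      rw [← hzsq, norm_pow]
    rw [h1, Complex.sq_norm, Complex.normSq_apply]; ring
  have hzre : 0 ≤ z.re := by
    rw [hz, Complex.cpow_def_of_ne_zero hwne, Complex.exp_re]
    apply mul_nonneg (Real.exp_nonneg _)
    have him : (Complex.log w * (1/2)).im = w.arg / 2 := by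
      rw [Complex.mul_im]
      simp [Complex.log_im]
      ring
    rw [him]
    apply Real.cos_nonneg_of_mem_Icc
    constructor
    · linarith [Complex.neg_pi_lt_arg w]
    · linarith [Complex.arg_le_pi w]
  set s : ℝ := 1 + c^2 with hsdef
  set r : ℝ := Real.sqrt s with hrdef
  have hrpos : 0 < r := Real.sqrt_pos.mpr hs
  have hr2 : r^2 = s := Real.sq_sqrt hs.le
  have key : (2 * z.re)^2 = 2*π * ((r + 1)/s) := by
    have hh : 2 * z.re^2 = w.re + ‖w‖ := by rw [← hre2, ← habs]; ring
    rw [hwre, habsw] at hh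
    have h4 : (2*z.re)^2 = 2 * (2 * z.re^2) := by ring
    rw [h4, hh, ← hr2]
    field_simp
    ring
  have h2z : 2 * z.re = Real.sqrt ((2*z.re)^2) := (Real.sqrt_sq (by linarith)).symm
  rw [h2z, key, Real.sqrt_mul (by positivity : (0:ℝ) ≤ 2*π)]

/-- û₀(ξ) = e^{−|ξ|}/√|ξ| is integrable and its inverse Fourier transform is the
explicit positive, bounded, continuous function
u₀(x) = √(2π)·√((√(1+4π²x²)+1)/(1+4π²x²)). -/
theorem example_inverse_fourier :
    Integrable (fun ξ : ℝ => Real.exp (-|ξ|) / Real.sqrt |ξ|) ∧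
    (∀ x : ℝ,
      (∫ ξ : ℝ, ((Real.exp (-|ξ|) / Real.sqrt |ξ|) : ℂ)
          * Complex.exp ((2 * π * x * ξ) * Complex.I))
        = ((Real.sqrt (2 * π) *
            Real.sqrt ((Real.sqrt (1 + 4 * π ^ 2 * x ^ 2) + 1) / (1 + 4 * π ^ 2 * x ^ 2))) : ℂ)) ∧
    Continuous (fun x : ℝ => Real.sqrt (2 * π) *
        Real.sqrt ((Real.sqrt (1 + 4 * π ^ 2 * x ^ 2) + 1) / (1 + 4 * π ^ 2 * x ^ 2))) ∧
    (∀ x : ℝ, 0 < Real.sqrt (2 * π) *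
        Real.sqrt ((Real.sqrt (1 + 4 * π ^ 2 * x ^ 2) + 1) / (1 + 4 * π ^ 2 * x ^ 2))) ∧
    (∃ M : ℝ, ∀ x : ℝ, Real.sqrt (2 * π) *
        Real.sqrt ((Real.sqrt (1 + 4 * π ^ 2 * x ^ 2) + 1) / (1 + 4 * π ^ 2 * x ^ 2)) ≤ M) := by
  refine ⟨aux_int, ?_, ?_, ?_, ?_⟩
  · intro x
    have h := (main_integral (2*π*x)).trans (gauss_value (2*π*x))
    have e2 : 1 + (2*π*x)^2 = 1 + 4*π^2*x^2 := by ring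
    rw [e2] at h
    push_cast at h
    rw [← h]
    congr 1
    funext ξ
    rw [Complex.ofReal_exp, Complex.ofReal_neg]
  · have hden : ∀ x : ℝ, (1 + 4*π^2*x^2) ≠ 0 := fun x => by positivity
    apply continuous_const.mul
    apply Real.continuous_sqrt.comp
    exact ((Real.continuous_sqrt.comp (by continuity)).add continuous_const).div
      (by continuity) hden
  · intro x
    have h1 : (0:ℝ) < 1 + 4*π^2*x^2 := by positivity
    have h2 : (0:ℝ) < Real.sqrt (1 + 4*π^2*x^2) + 1 := by positivity
    positivity
  · refine ⟨Real.sqrt (2*π) * Real.sqrt 2, fun x => ?_⟩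
    have hs : (1:ℝ) ≤ 1 + 4*π^2*x^2 := by nlinarith [sq_nonneg (π*x)]
    have hspos : (0:ℝ) < 1 + 4*π^2*x^2 := by positivity
    have hsq : Real.sqrt (1 + 4*π^2*x^2) ≤ 1 + 4*π^2*x^2 := by
      have h5 : Real.sqrt (1 + 4*π^2*x^2) ≤ Real.sqrt ((1 + 4*π^2*x^2)^2) :=
        Real.sqrt_le_sqrt (by nlinarith)
      rwa [Real.sqrt_sq hspos.le] at h5
    apply mul_le_mul_of_nonneg_left _ (Real.sqrt_nonneg _)
    apply Real.sqrt_le_sqrt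
    rw [div_le_iff₀ hspos]
    nlinarith
end

section
/- Let f ∈ L¹(ℝ) be positive, even, and radially decreasing. Then g(ξ) = f(ξ)/√|ξ| is in L¹(ℝ), is even, radially decreasing on (0,∞), and satisfies ∫_0^{3/(4x)} g(ξ) cos(2πxξ) dξ > 0 for every x > 0. -/
open MeasureTheory Real intervalIntegral

private lemma pi_num_aux : 0 < 2 - π^2/20 - 4/π := by
  have hπ := Real.pi_pos
  have hp1 := Real.pi_gt_d6
  have hp2 := Real.pi_lt_d2
  have h4 : 4/π < 1.28 := by
    rw [div_lt_iff₀ hπ]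
    nlinarith
  have hsq : π^2 < 9.9226 := by nlinarith
  linarith

/-- For any positive, even, radially decreasing f ∈ L¹, the function g(ξ) = f(ξ)/√|ξ|
is integrable, even, radially decreasing on (0,∞) and satisfies the positivity
condition (H2) at every x > 0. -/
theorem general_H2 (f : ℝ → ℝ) (hf : Integrable f) (hf0 : ∀ ξ, 0 < f ξ)
    (hfeven : ∀ ξ, f (-ξ) = f ξ)
    (hfdec : ∀ ξ₁ ξ₂ : ℝ, |ξ₁| ≤ |ξ₂| → f ξ₂ ≤ f ξ₁) :
    Integrable (fun ξ : ℝ => f ξ / Real.sqrt |ξ|) ∧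
    (∀ ξ : ℝ, f (-ξ) / Real.sqrt |(-ξ)| = f ξ / Real.sqrt |ξ|) ∧
    (∀ ξ₁ ξ₂ : ℝ, 0 < ξ₁ → ξ₁ ≤ ξ₂ → f ξ₂ / Real.sqrt |ξ₂| ≤ f ξ₁ / Real.sqrt |ξ₁|) ∧
    (∀ x : ℝ, 0 < x →
      0 < ∫ ξ in (0 : ℝ)..(3 / (4 * x)), (f ξ / Real.sqrt |ξ|) * Real.cos (2 * π * x * ξ)) := by
  have hsm : Measurable (fun ξ : ℝ => (Real.sqrt |ξ|)⁻¹) :=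
    ((Real.continuous_sqrt.comp continuous_abs).measurable).inv
  have hmeas : AEStronglyMeasurable (fun ξ : ℝ => f ξ / Real.sqrt |ξ|) volume := by
    simp only [div_eq_mul_inv]
    exact hf.1.mul hsm.aestronglyMeasurable
  have hrp : ∀ ξ : ℝ, 0 ≤ ξ → ξ ^ (-(1/2) : ℝ) = (Real.sqrt ξ)⁻¹ := by
    intro ξ hξ
    rw [Real.rpow_neg hξ, ← Real.sqrt_eq_rpow]
  refine ⟨?_, ?_, ?_, ?_⟩
  · -- Integrable
    have h1 : IntegrableOn (fun ξ : ℝ => f ξ / Real.sqrt |ξ|) {ξ : ℝ | 1 ≤ |ξ|} := by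
      refine Integrable.mono' hf.restrict hmeas.restrict ?_
      filter_upwards [ae_restrict_mem (by
        have : {ξ : ℝ | 1 ≤ |ξ|} = Set.Iic (-1) ∪ Set.Ici 1 := by
          ext ξ; simp [le_abs, abs_le, Set.mem_Iic, Set.mem_Ici, le_neg]
          constructor
          · rintro (h | h)
            · right; exact h
            · left; linarith
          · rintro (h | h)
            · right; linarith
            · left; exact h
        rw [this]; exact measurableSet_Iic.union measurableSet_Ici)] with ξ hξ
      have h1s : (1:ℝ) ≤ Real.sqrt |ξ| := by
        rw [show (1:ℝ) = Real.sqrt 1 by simp]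
        exact Real.sqrt_le_sqrt hξ
      have := hf0 ξ
      rw [Real.norm_eq_abs, abs_of_nonneg (div_nonneg this.le (Real.sqrt_nonneg _))]
      calc f ξ / Real.sqrt |ξ| ≤ f ξ / 1 := by
            apply div_le_div_of_nonneg_left this.le one_pos h1s
        _ = f ξ := by ring
    have h01 : IntervalIntegrable (fun ξ : ℝ => f ξ / Real.sqrt |ξ|) volume 0 1 := by
      apply IntervalIntegrable.mono_fun
        ((intervalIntegrable_rpow' (by norm_num : (-1:ℝ) < -(1/2))).const_mul (f 0))
        hmeas.restrict
      rw [Set.uIoc_of_le (zero_le_one : (0:ℝ) ≤ 1)]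
      filter_upwards [ae_restrict_mem measurableSet_Ioc] with ξ hξ
      have hξ0 : 0 < ξ := hξ.1
      simp only [Real.norm_eq_abs]
      rw [abs_of_nonneg (div_nonneg (hf0 ξ).le (Real.sqrt_nonneg _)),
        abs_of_pos hξ0, abs_of_nonneg (mul_nonneg (hf0 0).le (Real.rpow_nonneg hξ0.le _)),
        hrp ξ hξ0.le, div_eq_mul_inv]
      exact mul_le_mul_of_nonneg_right (hfdec 0 ξ (by simp [abs_of_pos hξ0]; positivity))
        (by positivity)
    have geven : ∀ ξ : ℝ, f (-ξ) / Real.sqrt |(-ξ)| = f ξ / Real.sqrt |ξ| := by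
      intro ξ; rw [abs_neg, hfeven]
    have hneg : IntervalIntegrable (fun ξ : ℝ => f ξ / Real.sqrt |ξ|) volume (-1) 0 := by
      have h2 := ((IntervalIntegrable.iff_comp_neg (f := fun ξ : ℝ => f ξ / Real.sqrt |ξ|) (a := 0) (b := 1) enorm_ne_top).mp h01)
      simp only [geven, neg_zero] at h2
      exact h2.symm
    have hIcc : IntegrableOn (fun ξ : ℝ => f ξ / Real.sqrt |ξ|) (Set.Icc (-1:ℝ) 1) := by
      rw [integrableOn_Icc_iff_integrableOn_Ioc]
      have := (hneg.trans h01)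
      rwa [intervalIntegrable_iff, Set.uIoc_of_le (by norm_num : (-1:ℝ) ≤ 1)] at this
    rw [← integrableOn_univ]
    apply (hIcc.union h1).mono_set
    intro ξ _
    rcases le_total |ξ| 1 with h | h
    · exact Or.inl (abs_le.mp h)
    · exact Or.inr h
  · intro ξ; rw [abs_neg, hfeven]
  · intro ξ₁ ξ₂ h1 h2
    apply div_le_div₀ (hf0 ξ₁).le
      (hfdec ξ₁ ξ₂ (by rw [abs_of_pos h1, abs_of_pos (lt_of_lt_of_le h1 h2)]; exact h2))
      (Real.sqrt_pos.2 (abs_pos.2 h1.ne'))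
      (Real.sqrt_le_sqrt (by rw [abs_of_pos h1, abs_of_pos (lt_of_lt_of_le h1 h2)]; exact h2))
  · intro x hx
    have hπ := Real.pi_pos
    have h3a : 3 / (4 * x) = 3 * (1 / (4 * x)) := by ring
    set a : ℝ := 1 / (4 * x) with ha_def
    have ha : 0 < a := by positivity
    have hxa : x * a = 1 / 4 := by rw [ha_def]; field_simp
    set s : ℝ := Real.sqrt a with hs_def
    have hs : 0 < s := Real.sqrt_pos.2 ha
    have hs2 : s ^ 2 = a := Real.sq_sqrt ha.le
    rw [h3a]
    have h3a0 : (0:ℝ) ≤ 3 * a := by positivity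
    have hcongr : (∫ ξ in (0:ℝ)..(3*a), (f ξ / Real.sqrt |ξ|) * Real.cos (2*π*x*ξ))
        = ∫ ξ in (0:ℝ)..(3*a), (f ξ / Real.sqrt ξ) * Real.cos (2*π*x*ξ) := by
      apply intervalIntegral.integral_congr
      intro ξ hξ
      rw [Set.uIcc_of_le h3a0] at hξ
      simp only [abs_of_nonneg hξ.1]
    rw [hcongr]
    have hGm : AEStronglyMeasurable
        (fun ξ : ℝ => (f ξ / Real.sqrt ξ) * Real.cos (2*π*x*ξ)) volume := by
      simp only [div_eq_mul_inv]
      exact (hf.1.mul ((Real.continuous_sqrt.measurable).inv).aestronglyMeasurable).mul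
        (Real.continuous_cos.comp (by continuity)).aestronglyMeasurable
    have hGint : ∀ b c : ℝ, 0 ≤ b → b ≤ c →
        IntervalIntegrable (fun ξ : ℝ => (f ξ / Real.sqrt ξ) * Real.cos (2*π*x*ξ))
          volume b c := by
      intro b c hb hbc
      apply IntervalIntegrable.mono_fun
        ((intervalIntegrable_rpow' (by norm_num : (-1:ℝ) < -(1/2))).const_mul (f 0))
        hGm.restrict
      rw [Set.uIoc_of_le hbc]
      filter_upwards [ae_restrict_mem measurableSet_Ioc] with ξ hξ
      have hξ0 : 0 < ξ := lt_of_le_of_lt hb hξ.1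
      have hsξ : 0 < Real.sqrt ξ := Real.sqrt_pos.2 hξ0
      simp only [Real.norm_eq_abs, abs_mul]
      rw [abs_of_nonneg (div_nonneg (hf0 ξ).le hsξ.le), abs_of_pos (hf0 0),
        abs_of_nonneg (Real.rpow_nonneg hξ0.le _), hrp ξ hξ0.le]
      calc f ξ / Real.sqrt ξ * |Real.cos (2*π*x*ξ)| ≤ f ξ / Real.sqrt ξ * 1 :=
            mul_le_mul_of_nonneg_left (Real.abs_cos_le_one _)
              (div_nonneg (hf0 ξ).le hsξ.le)
        _ = f ξ * (Real.sqrt ξ)⁻¹ := by ring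
        _ ≤ f 0 * (Real.sqrt ξ)⁻¹ :=
            mul_le_mul_of_nonneg_right (hfdec 0 ξ (by simpa using abs_nonneg ξ))
              (by positivity)
    -- lower bound on [0,a]
    have hr1 : IntervalIntegrable (fun ξ:ℝ => ξ ^ (-(1/2):ℝ)) volume 0 a :=
      intervalIntegrable_rpow' (by norm_num)
    have hr2 : IntervalIntegrable (fun ξ:ℝ => ξ ^ ((3:ℝ)/2)) volume 0 a :=
      intervalIntegrable_rpow' (by norm_num)
    have hφint : IntervalIntegrable
        (fun ξ:ℝ => f a * (ξ ^ (-(1/2):ℝ) - 2*π^2*x^2 * ξ ^ ((3:ℝ)/2))) volume 0 a :=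
      (hr1.sub (hr2.const_mul (2*π^2*x^2))).const_mul (f a)
    have ha2 : a ^ ((2:ℝ)) = a^2 := by
      rw [show (2:ℝ) = ((2:ℕ):ℝ) by norm_num, Real.rpow_natCast]
    have h52 : a ^ ((5:ℝ)/2) = a^2 * s := by
      rw [show (5:ℝ)/2 = 2 + 1/2 by norm_num, Real.rpow_add ha, ha2, hs_def,
        Real.sqrt_eq_rpow]
    have hφval : ∫ ξ in (0:ℝ)..a, f a * (ξ ^ (-(1/2):ℝ) - 2*π^2*x^2 * ξ ^ ((3:ℝ)/2))
        = f a * (2*s - (4/5)*π^2*x^2*(a^2*s)) := by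
      rw [intervalIntegral.integral_const_mul,
        intervalIntegral.integral_sub hr1 (hr2.const_mul _),
        intervalIntegral.integral_const_mul,
        integral_rpow (Or.inl (by norm_num : (-1:ℝ) < -(1/2))),
        integral_rpow (Or.inl (by norm_num : (-1:ℝ) < (3:ℝ)/2))]
      norm_num
      left
      rw [h52, show a ^ ((1:ℝ)/2) = s by rw [hs_def, Real.sqrt_eq_rpow]]
      ring
    have key1 : f a * (2*s - (4/5)*π^2*x^2*(a^2*s))
        ≤ ∫ ξ in (0:ℝ)..a, (f ξ / Real.sqrt ξ) * Real.cos (2*π*x*ξ) := by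
      rw [← hφval]
      apply intervalIntegral.integral_mono_on ha.le hφint (hGint 0 a le_rfl ha.le)
      intro ξ hξ
      rcases eq_or_lt_of_le hξ.1 with h0 | h0
      · rw [← h0]
        simp [Real.zero_rpow (by norm_num : -(1/2:ℝ) ≠ 0),
          Real.zero_rpow (by norm_num : (3:ℝ)/2 ≠ 0)]
      · have hξa : ξ ≤ a := hξ.2
        have hsξ : 0 < Real.sqrt ξ := Real.sqrt_pos.2 h0
        have hθ2 : 2*π*x*ξ ≤ π/2 := by
          have h1 : 2*π*x*ξ ≤ 2*π*x*a :=
            mul_le_mul_of_nonneg_left hξa (by positivity)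
          nlinarith [h1, hxa, hπ]
        have hθ0 : 0 ≤ 2*π*x*ξ := by positivity
        have hcos0 : 0 ≤ Real.cos (2*π*x*ξ) :=
          Real.cos_nonneg_of_mem_Icc ⟨by linarith, hθ2⟩
        have hcos1 : 1 - (2*π*x*ξ)^2/2 ≤ Real.cos (2*π*x*ξ) :=
          Real.one_sub_sq_div_two_le_cos
        have hfa : f a ≤ f ξ := hfdec ξ a (by rw [abs_of_pos h0, abs_of_pos ha]; exact hξa)
        have h32 : ξ ^ ((3:ℝ)/2) = ξ^2 * ξ ^ (-(1/2):ℝ) := by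
          rw [show (3:ℝ)/2 = 2 + -(1/2) by norm_num, Real.rpow_add h0,
            show (2:ℝ) = ((2:ℕ):ℝ) by norm_num, Real.rpow_natCast]
        rw [h32, hrp ξ h0.le, div_eq_mul_inv]
        have step : f a * (1 - 2*π^2*x^2*ξ^2) ≤ f ξ * Real.cos (2*π*x*ξ) := by
          calc f a * (1 - 2*π^2*x^2*ξ^2) = f a * (1 - (2*π*x*ξ)^2/2) := by ring
            _ ≤ f a * Real.cos (2*π*x*ξ) := mul_le_mul_of_nonneg_left hcos1 (hf0 a).le
            _ ≤ f ξ * Real.cos (2*π*x*ξ) := mul_le_mul_of_nonneg_right hfa hcos0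
        calc f a * ((Real.sqrt ξ)⁻¹ - 2*π^2*x^2 * (ξ^2 * (Real.sqrt ξ)⁻¹))
            = (f a * (1 - 2*π^2*x^2*ξ^2)) * (Real.sqrt ξ)⁻¹ := by ring
          _ ≤ (f ξ * Real.cos (2*π*x*ξ)) * (Real.sqrt ξ)⁻¹ :=
              mul_le_mul_of_nonneg_right step (by positivity)
          _ = f ξ * (Real.sqrt ξ)⁻¹ * Real.cos (2*π*x*ξ) := by ring
    -- lower bound on [a,3a]
    have hθhalf : 2*π*x*a = π/2 := by linear_combination 2*π*hxa
    have hval2 : ∫ ξ in a..(3*a), f a * s⁻¹ * Real.cos (2*π*x*ξ)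
        = f a * s⁻¹ * (-2) * (2*π*x)⁻¹ := by
      rw [intervalIntegral.integral_const_mul]
      rw [intervalIntegral.integral_comp_mul_left (fun t => Real.cos t)
        (by positivity : (2*π*x) ≠ 0), integral_cos]
      rw [show 2*π*x*(3*a) = 3*(π/2) by linear_combination 6*π*hxa, show 2*π*x*a = π/2 from hθhalf]
      rw [show 3*(π/2) = π/2 + π by ring, Real.sin_add_pi, Real.sin_pi_div_two]
      simp [smul_eq_mul]
      ring
    have key2 : f a * s⁻¹ * (-2) * (2*π*x)⁻¹
        ≤ ∫ ξ in a..(3*a), (f ξ / Real.sqrt ξ) * Real.cos (2*π*x*ξ) := by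
      rw [← hval2]
      apply intervalIntegral.integral_mono_on (by linarith)
        ((continuous_const.mul (Real.continuous_cos.comp
          (continuous_const.mul continuous_id))).intervalIntegrable a (3*a))
        (hGint a (3*a) ha.le (by linarith))
      intro ξ hξ
      have hξ0 : 0 < ξ := lt_of_lt_of_le ha hξ.1
      have hsξ : 0 < Real.sqrt ξ := Real.sqrt_pos.2 hξ0
      have hθlo : π/2 ≤ 2*π*x*ξ := by
        have h1 : 2*π*x*a ≤ 2*π*x*ξ := mul_le_mul_of_nonneg_left hξ.1 (by positivity)
        linarith [hθhalf]
      have hθhi : 2*π*x*ξ ≤ π + π/2 := by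
        have h1 : 2*π*x*ξ ≤ 2*π*x*(3*a) := mul_le_mul_of_nonneg_left hξ.2 (by positivity)
        nlinarith [hxa]
      have hcos : Real.cos (2*π*x*ξ) ≤ 0 :=
        Real.cos_nonpos_of_pi_div_two_le_of_le hθlo hθhi
      have hss : (Real.sqrt ξ)⁻¹ ≤ s⁻¹ := by
        apply inv_anti₀ hs
        rw [hs_def]
        exact Real.sqrt_le_sqrt hξ.1
      have hmul : f ξ * (Real.sqrt ξ)⁻¹ ≤ f a * s⁻¹ :=
        mul_le_mul (hfdec a ξ (by rw [abs_of_pos ha, abs_of_pos hξ0]; exact hξ.1)) hss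
          (by positivity) (hf0 a).le
      rw [div_eq_mul_inv]
      calc f a * s⁻¹ * Real.cos (2*π*x*ξ)
          ≤ f ξ * (Real.sqrt ξ)⁻¹ * Real.cos (2*π*x*ξ) :=
            mul_le_mul_of_nonpos_right hmul hcos
        _ = f ξ * (Real.sqrt ξ)⁻¹ * Real.cos (2*π*x*ξ) := rfl
    -- combine
    rw [← intervalIntegral.integral_add_adjacent_intervals (hGint 0 a le_rfl ha.le)
      (hGint a (3*a) ha.le (by linarith))]
    have hx2 : x^2 * a^2 = 1/16 := by linear_combination (x*a + 1/4) * hxa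
    have hA : f a * (2*s - (4/5)*π^2*x^2*(a^2*s)) = f a * s * (2 - π^2/20) := by
      linear_combination (-(f a * s * (4/5) * π^2)) * hx2
    have h2πx : (2*π*x)⁻¹ = 2*a/π := by
      apply inv_eq_of_mul_eq_one_right
      rw [mul_div_assoc', div_eq_one_iff_eq hπ.ne']
      linear_combination 4*π*hxa
    have hB : f a * s⁻¹ * (-2) * (2*π*x)⁻¹ = -(f a * s * (4/π)) := by
      rw [h2πx, ← hs2]
      field_simp
      ring
    rw [hA] at key1
    rw [hB] at key2
    have hfas : 0 < f a * s := mul_pos (hf0 a) hs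
    have hkey : 0 < 2 - π^2/20 - 4/π := pi_num_aux
    linarith [mul_pos hfas hkey, key1, key2]
end
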